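/- arXiv:0709.2289 — 6 statements merged into one kernel-verified Lean document; each statement's English description precedes it below -/
import Mathlib

section
/- Let Q ∈ Z[x] be a polynomial with integer coefficients, let p be a prime, and suppose every root b of Q in Z/pZ satisfies Q'(b) ≢ 0 (mod p). Let z_p be the number of roots of Q in Z/pZ. Assume Q(i) ≠ 0 for all positive integers i. Then (1/n) Σ_{i=1}^{n} ν_p(Q(i)) tends to z_p/(p-1) as n → ∞. -/
open Polynomial Filter


section
variable {p : ℕ} [hp : Fact p.Prime]

lemma aeval_zmod (Q : Polynomial ℤ) (x : ℤ) :
    aeval (x : ZMod p) Q = ((Q.eval x : ℤ) : ZMod p) := by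
  simpa using aeval_algebraMap_apply_eq_algebraMap_eval (A := ZMod p) x Q

lemma root_mod_of_dvd (Q : Polynomial ℤ) (x : ℤ) (h : (p:ℤ) ∣ Q.eval x) :
    aeval (x : ZMod p) Q = 0 := by
  rw [aeval_zmod, ZMod.intCast_zmod_eq_zero_iff_dvd]; exact h

lemma deriv_unit (Q : Polynomial ℤ)
    (hHensel : ∀ b : ZMod p, aeval b Q = 0 → aeval b (derivative Q) ≠ 0)
    (x : ℤ) (h : (p:ℤ) ∣ Q.eval x) : ¬ ((p:ℤ) ∣ (derivative Q).eval x) := by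
  intro hd
  exact hHensel _ (root_mod_of_dvd Q x h) (root_mod_of_dvd (derivative Q) x hd)

omit hp in
lemma eval_congr (Q : Polynomial ℤ) (k : ℕ) {a b : ℤ} (h : (p:ℤ)^k ∣ a - b) :
    (p:ℤ)^k ∣ Q.eval a - Q.eval b :=
  h.trans (Polynomial.sub_dvd_eval_sub a b Q)

lemma count_base (Q : Polynomial ℤ) :
    ((Finset.range p).filter (fun b : ℕ => (p:ℤ) ∣ Q.eval (b:ℤ))).card
      = (Finset.univ.filter (fun b : ZMod p => aeval b Q = 0)).card := by
  apply Finset.card_bij (fun b _ => ((b : ℕ) : ZMod p))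
  · intro a ha
    simp only [Finset.mem_filter, Finset.mem_range] at ha
    simp only [Finset.mem_filter, Finset.mem_univ, true_and]
    have h2 : (((a : ℕ) : ℤ) : ZMod p) = ((a : ℕ) : ZMod p) := by push_cast; ring
    rw [← h2]
    exact root_mod_of_dvd Q _ ha.2
  · intro a ha b hb h
    simp only [Finset.mem_filter, Finset.mem_range] at ha hb
    have := (ZMod.natCast_eq_natCast_iff' a b p).mp h
    rwa [Nat.mod_eq_of_lt ha.1, Nat.mod_eq_of_lt hb.1] at this
  · intro b hb
    simp only [Finset.mem_filter, Finset.mem_univ, true_and] at hb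
    refine ⟨b.val, ?_, by simp [ZMod.natCast_val, ZMod.cast_id]⟩
    simp only [Finset.mem_filter, Finset.mem_range]
    refine ⟨ZMod.val_lt b, ?_⟩
    have h3 : aeval ((b.val : ℤ) : ZMod p) Q = 0 := by
      rw [show (((b.val : ℤ)) : ZMod p) = b by push_cast; simp [ZMod.natCast_val, ZMod.cast_id]]
      exact hb
    rw [aeval_zmod, ZMod.intCast_zmod_eq_zero_iff_dvd] at h3
    exact h3

lemma count_step (Q : Polynomial ℤ)
    (hHensel : ∀ b : ZMod p, aeval b Q = 0 → aeval b (derivative Q) ≠ 0)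
    (k : ℕ) (hk : 1 ≤ k) :
    ((Finset.range (p^(k+1))).filter (fun b : ℕ => (p:ℤ)^(k+1) ∣ Q.eval (b:ℤ))).card
      = ((Finset.range (p^k)).filter (fun b : ℕ => (p:ℤ)^k ∣ Q.eval (b:ℤ))).card := by
  have hp2 : 2 ≤ p := hp.out.two_le
  have hm : 0 < p^k := Nat.pow_pos (n := k) hp.out.pos
  have hpInt : Prime (p:ℤ) := Int.prime_iff_natAbs_prime.mpr (by simpa using hp.out)
  apply Finset.card_bij (fun b _ => b % p^k)
  · intro a ha
    simp only [Finset.mem_filter, Finset.mem_range] at ha ⊢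
    refine ⟨Nat.mod_lt _ hm, ?_⟩
    have h1 : (p:ℤ)^k ∣ Q.eval (a:ℤ) := (pow_dvd_pow (p:ℤ) (Nat.le_succ k)).trans ha.2
    have h2 : (p:ℤ)^k ∣ ((a % p^k : ℕ) : ℤ) - (a:ℤ) := by
      have h3 := Nat.mod_add_div a (p^k)
      refine ⟨-((a / p^k : ℕ) : ℤ), ?_⟩
      push_cast
      push_cast at h3
      linarith
    have h5 := (eval_congr Q k h2).add h1
    simpa using h5
  · intro a ha b hb h
    simp only [Finset.mem_filter, Finset.mem_range] at ha hb
    have hmod : a ≡ b [MOD p^k] := h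
    obtain ⟨s, hs⟩ := hmod.dvd
    push_cast at hs
    -- hs : (b:ℤ) - a = p^k * s
    obtain ⟨c, hc⟩ := Q.binomExpansion (a:ℤ) ((p:ℤ)^k * s)
    have hab : (b:ℤ) = (a:ℤ) + (p:ℤ)^k * s := by linarith
    rw [← hab] at hc
    have hdiff : (p:ℤ)^(k+1) ∣ Q.eval (b:ℤ) - Q.eval (a:ℤ) := dvd_sub hb.2 ha.2
    have hfact : Q.eval (b:ℤ) - Q.eval (a:ℤ)
        = (p:ℤ)^k * ((derivative Q).eval (a:ℤ) * s + c * (p:ℤ)^k * s^2) := by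
      rw [hc]; ring
    have hpk : (p:ℤ)^(k+1) = (p:ℤ)^k * p := pow_succ (p:ℤ) k
    have hdvd : (p:ℤ) ∣ (derivative Q).eval (a:ℤ) * s + c * (p:ℤ)^k * s^2 := by
      rw [hfact, hpk] at hdiff
      exact (mul_dvd_mul_iff_left (a := (p:ℤ)^k) (by positivity)).mp hdiff
    have hpm : (p:ℤ) ∣ (p:ℤ)^k := dvd_pow_self _ (by omega)
    have h5 : (p:ℤ) ∣ c * (p:ℤ)^k * s^2 := (hpm.mul_left c).mul_right (s^2)
    have hds : (p:ℤ) ∣ (derivative Q).eval (a:ℤ) * s := by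
      have h6 := dvd_sub hdvd h5
      simpa using h6
    have hpa : (p:ℤ) ∣ Q.eval (a:ℤ) := (dvd_pow_self (p:ℤ) (Nat.succ_ne_zero k)).trans ha.2
    have hs0 : (p:ℤ) ∣ s := by
      rcases hpInt.dvd_mul.mp hds with h' | h'
      · exact absurd h' (deriv_unit Q hHensel _ hpa)
      · exact h'
    have hsb : |(p:ℤ)^k * s| < (p:ℤ)^(k+1) := by
      rw [← hs, abs_lt]
      have h1 : ((a:ℤ)) < (p:ℤ)^(k+1) := by exact_mod_cast ha.1
      have h2 : ((b:ℤ)) < (p:ℤ)^(k+1) := by exact_mod_cast hb.1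
      have h3 : (0:ℤ) ≤ a := Int.ofNat_nonneg a
      have h4 : (0:ℤ) ≤ b := Int.ofNat_nonneg b
      constructor <;> linarith
    have hszero : s = 0 := by
      by_contra hsne
      have h1 : (p:ℤ) ≤ |s| := Int.le_of_dvd (abs_pos.mpr hsne) ((dvd_abs _ _).mpr hs0)
      have h2 : |(p:ℤ)^k * s| = (p:ℤ)^k * |s| := by
        rw [abs_mul, abs_of_nonneg (by positivity : (0:ℤ) ≤ (p:ℤ)^k)]
      have h3 : (p:ℤ)^k * (p:ℤ) ≤ (p:ℤ)^k * |s| :=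
        mul_le_mul_of_nonneg_left h1 (by positivity)
      rw [h2] at hsb
      rw [hpk] at hsb
      linarith
    have hba : (b:ℤ) = (a:ℤ) := by rw [hszero, mul_zero] at hs; linarith
    exact_mod_cast hba.symm
  · intro b hb
    simp only [Finset.mem_filter, Finset.mem_range] at hb
    obtain ⟨m0, hm0⟩ := hb.2
    have hpa : (p:ℤ) ∣ Q.eval (b:ℤ) := (dvd_pow_self (p:ℤ) (by omega)).trans hb.2
    have hQ'ne : (((derivative Q).eval (b:ℤ) : ℤ) : ZMod p) ≠ 0 := by
      intro h0
      exact deriv_unit Q hHensel _ hpa ((ZMod.intCast_zmod_eq_zero_iff_dvd _ _).mp h0)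
    set w : ZMod p := (-(m0 : ZMod p)) * (((derivative Q).eval (b:ℤ) : ℤ) : ZMod p)⁻¹ with hw
    refine ⟨b + p^k * w.val, ?_, ?_⟩
    · simp only [Finset.mem_filter, Finset.mem_range]
      constructor
      · have h1 : w.val + 1 ≤ p := ZMod.val_lt w
        have h2 : p^k * (w.val + 1) ≤ p^k * p := Nat.mul_le_mul_left _ h1
        have h3 : p^k * (w.val + 1) = p^k * w.val + p^k := by ring
        have h4 : p^(k+1) = p^k * p := pow_succ p k
        have h5 := hb.1
        omega
      · obtain ⟨c, hc⟩ := Q.binomExpansion (b:ℤ) ((p:ℤ)^k * w.val)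
        have hcast : ((b + p^k * w.val : ℕ) : ℤ) = (b:ℤ) + (p:ℤ)^k * (w.val : ℤ) := by
          push_cast; ring
        rw [hcast, hc, hm0]
        have key : (p:ℤ) ∣ m0 + (derivative Q).eval (b:ℤ) * (w.val:ℤ)
            + c * ((p:ℤ)^k * (w.val:ℤ)^2) := by
          rw [← ZMod.intCast_zmod_eq_zero_iff_dvd]
          push_cast [ZMod.natCast_self, ZMod.natCast_val, ZMod.cast_id]
          rw [zero_pow (by omega : k ≠ 0), zero_mul, mul_zero, add_zero, hw]
          rw [mul_comm (((derivative Q).eval (b:ℤ) : ℤ) : ZMod p)]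
          rw [mul_assoc, inv_mul_cancel₀ hQ'ne, mul_one]
          ring
        obtain ⟨e, he⟩ := key
        refine ⟨e, ?_⟩
        rw [pow_succ]
        calc (p:ℤ)^k * m0 + (derivative Q).eval (b:ℤ) * ((p:ℤ)^k * (w.val:ℤ))
              + c * ((p:ℤ)^k * (w.val:ℤ))^2
            = (p:ℤ)^k * (m0 + (derivative Q).eval (b:ℤ) * (w.val:ℤ)
              + c * ((p:ℤ)^k * (w.val:ℤ)^2)) := by ring
          _ = (p:ℤ)^k * ((p:ℤ) * e) := by rw [he]
          _ = (p:ℤ)^k * p * e := by ring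
    · simp [Nat.add_mul_mod_self_left, Nat.mod_eq_of_lt hb.1]

end


lemma count_Ico_eq (C : ℕ → Prop) [DecidablePred C] (m : ℕ) (hm : 0 < m)
    (hper : ∀ i j : ℕ, i % m = j % m → (C i ↔ C j)) (a : ℕ) :
    ((Finset.Ico a (a+m)).filter C).card = ((Finset.range m).filter C).card := by
  apply Finset.card_bij (fun b _ => b % m)
  · intro x hx
    simp only [Finset.mem_filter, Finset.mem_Ico] at hx
    simp only [Finset.mem_filter, Finset.mem_range]
    refine ⟨Nat.mod_lt _ hm, ?_⟩
    exact (hper x (x % m) (Nat.mod_mod_of_dvd x dvd_rfl).symm).mp hx.2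
  · intro x hx y hy hxy
    simp only [Finset.mem_filter, Finset.mem_Ico] at hx hy
    rcases le_total x y with hle | hle
    · have hdvd := (Nat.modEq_iff_dvd' hle).mp hxy
      have := Nat.eq_zero_of_dvd_of_lt hdvd
      omega
    · have hdvd := (Nat.modEq_iff_dvd' hle).mp hxy.symm
      have := Nat.eq_zero_of_dvd_of_lt hdvd
      omega
  · intro r hr
    simp only [Finset.mem_filter, Finset.mem_range] at hr
    by_cases hcase : a % m ≤ r
    · refine ⟨m * (a / m) + r, ?_, ?_⟩
      · simp only [Finset.mem_filter, Finset.mem_Ico]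
        have h1 := Nat.div_add_mod a m
        have h2 : (m * (a / m) + r) % m = r := by
          rw [Nat.mul_add_mod, Nat.mod_eq_of_lt hr.1]
        exact ⟨by omega, (hper _ r (by rw [h2, Nat.mod_eq_of_lt hr.1])).mpr hr.2⟩
      · rw [Nat.mul_add_mod, Nat.mod_eq_of_lt hr.1]
    · refine ⟨m * (a / m) + m + r, ?_, ?_⟩
      · simp only [Finset.mem_filter, Finset.mem_Ico]
        have h1 := Nat.div_add_mod a m
        have hmod := Nat.mod_lt a hm
        have h2 : (m * (a / m) + m + r) % m = r := by
          have : m * (a / m) + m + r = m * (a / m + 1) + r := by ring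
          rw [this, Nat.mul_add_mod, Nat.mod_eq_of_lt hr.1]
        exact ⟨by omega, (hper _ r (by rw [h2, Nat.mod_eq_of_lt hr.1])).mpr hr.2⟩
      · have : m * (a / m) + m + r = m * (a / m + 1) + r := by ring
        rw [this, Nat.mul_add_mod, Nat.mod_eq_of_lt hr.1]

lemma count_blocks (C : ℕ → Prop) [DecidablePred C] (m : ℕ) (hm : 0 < m)
    (hper : ∀ i j : ℕ, i % m = j % m → (C i ↔ C j)) (q : ℕ) :
    ((Finset.Ico 1 (1 + q*m)).filter C).card = q * ((Finset.range m).filter C).card := by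
  induction q with
  | zero => simp
  | succ q ih =>
    have hsplit : Finset.Ico 1 (1 + q*m) ∪ Finset.Ico (1 + q*m) (1 + q*m + m)
        = Finset.Ico 1 (1 + (q+1)*m) := by
      rw [Finset.Ico_union_Ico_eq_Ico (by omega) (by omega)]
      congr 1
      ring
    rw [← hsplit, Finset.filter_union,
      Finset.card_union_of_disjoint
        (Finset.disjoint_filter_filter (Finset.Ico_disjoint_Ico_consecutive 1 _ _)),
      ih, count_Ico_eq C m hm hper]
    ring

lemma count_Icc_bounds (C : ℕ → Prop) [DecidablePred C] (m : ℕ) (hm : 0 < m)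
    (hper : ∀ i j : ℕ, i % m = j % m → (C i ↔ C j)) (n : ℕ) :
    (n / m) * ((Finset.range m).filter C).card ≤ ((Finset.Icc 1 n).filter C).card
    ∧ ((Finset.Icc 1 n).filter C).card ≤ (n / m + 1) * ((Finset.range m).filter C).card := by
  have hIcc : Finset.Icc 1 n = Finset.Ico 1 (n+1) := by
    rw [Finset.Ico_add_one_right_eq_Icc]
  have hdm := Nat.div_add_mod n m
  have hmod := Nat.mod_lt n hm
  constructor
  · rw [hIcc, ← count_blocks C m hm hper (n/m)]
    apply Finset.card_le_card
    apply Finset.filter_subset_filter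
    apply Finset.Ico_subset_Ico le_rfl
    have hcomm : n/m * m = m * (n/m) := Nat.mul_comm _ _
    omega
  · rw [hIcc, ← count_blocks C m hm hper (n/m + 1)]
    apply Finset.card_le_card
    apply Finset.filter_subset_filter
    apply Finset.Ico_subset_Ico le_rfl
    have : (n/m + 1) * m = m * (n/m) + m := by ring
    omega

-- |Q.eval i| ≤ B * n ^ d  for 1 ≤ i ≤ n
lemma eval_abs_le (Q : Polynomial ℤ) (n i : ℕ) (h1 : 1 ≤ i) (h2 : i ≤ n) :
    |Q.eval (i:ℤ)| ≤ ((∑ j ∈ Finset.range (Q.natDegree + 1), (Q.coeff j).natAbs : ℕ) : ℤ)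
      * (n:ℤ) ^ Q.natDegree := by
  rw [Polynomial.eval_eq_sum_range]
  refine le_trans (Finset.abs_sum_le_sum_abs _ _) ?_
  push_cast
  rw [Finset.sum_mul]
  apply Finset.sum_le_sum
  intro j hj
  simp only [Finset.mem_range] at hj
  rw [abs_mul, abs_pow, Int.abs_natCast]
  have hin : (i:ℤ) ≤ n := by exact_mod_cast h2
  have hi1 : (1:ℤ) ≤ i := by exact_mod_cast h1
  have h3 : (i:ℤ)^j ≤ (n:ℤ)^j := pow_le_pow_left₀ (by linarith) hin j
  have h4 : (n:ℤ)^j ≤ (n:ℤ)^Q.natDegree := pow_le_pow_right₀ (by linarith) (by omega)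
  have h5 : |Q.coeff j| = ((Q.coeff j).natAbs : ℤ) := (Int.abs_eq_natAbs _)
  rw [h5]
  have h6 : (0:ℤ) ≤ ((Q.coeff j).natAbs : ℤ) := Int.ofNat_nonneg _
  nlinarith [pow_pos (show (0:ℤ) < i by linarith) j]


lemma val_filter_card' (p : ℕ) [hp : Fact p.Prime] (x : ℤ) (hx : x ≠ 0) (K : ℕ) :
    ((Finset.Icc 1 K).filter (fun k => (p:ℤ)^k ∣ x)).card = min (padicValInt p x) K := by
  have hset : (Finset.Icc 1 K).filter (fun k => (p:ℤ)^k ∣ x)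
      = Finset.Icc 1 (min (padicValInt p x) K) := by
    ext k
    simp only [Finset.mem_filter, Finset.mem_Icc, le_min_iff]
    constructor
    · rintro ⟨⟨h1, h2⟩, h3⟩
      rcases (padicValInt_dvd_iff k x).mp h3 with h | h
      · exact absurd h hx
      · exact ⟨h1, h, h2⟩
    · rintro ⟨h1, h2, h3⟩
      exact ⟨⟨h1, h3⟩, (padicValInt_dvd_iff k x).mpr (Or.inr h2)⟩
  rw [hset, Nat.card_Icc]
  omega

lemma swap_sum (p : ℕ) (Q : Polynomial ℤ) (n K : ℕ) :
    ∑ k ∈ Finset.Icc 1 K,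
        ((Finset.Icc 1 n).filter (fun i : ℕ => (p:ℤ)^k ∣ Q.eval (i:ℤ))).card
      = ∑ i ∈ Finset.Icc 1 n,
        ((Finset.Icc 1 K).filter (fun k : ℕ => (p:ℤ)^k ∣ Q.eval (i:ℤ))).card := by
  simp_rw [Finset.card_filter]
  exact Finset.sum_comm

lemma sum_val_eq (p : ℕ) [hp : Fact p.Prime] (Q : Polynomial ℤ) (n M : ℕ)
    (hne : ∀ i ∈ Finset.Icc 1 n, Q.eval (i:ℤ) ≠ 0)
    (hM : ∀ i ∈ Finset.Icc 1 n, padicValInt p (Q.eval (i:ℤ)) ≤ M) :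
    ∑ i ∈ Finset.Icc 1 n, padicValInt p (Q.eval (i:ℤ))
      = ∑ k ∈ Finset.Icc 1 M,
          ((Finset.Icc 1 n).filter (fun i : ℕ => (p:ℤ)^k ∣ Q.eval (i:ℤ))).card := by
  rw [swap_sum]
  apply Finset.sum_congr rfl
  intro i hi
  rw [val_filter_card' p _ (hne i hi) M]
  have := hM i hi
  omega

lemma sum_val_ge (p : ℕ) [hp : Fact p.Prime] (Q : Polynomial ℤ) (n K : ℕ)
    (hne : ∀ i ∈ Finset.Icc 1 n, Q.eval (i:ℤ) ≠ 0) :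
    ∑ k ∈ Finset.Icc 1 K,
        ((Finset.Icc 1 n).filter (fun i : ℕ => (p:ℤ)^k ∣ Q.eval (i:ℤ))).card
      ≤ ∑ i ∈ Finset.Icc 1 n, padicValInt p (Q.eval (i:ℤ)) := by
  rw [swap_sum]
  apply Finset.sum_le_sum
  intro i hi
  rw [val_filter_card' p _ (hne i hi) K]
  omega

lemma geom_Icc (p : ℕ) (hp2 : 2 ≤ p) (M : ℕ) :
    ∑ k ∈ Finset.Icc 1 M, ((p:ℝ)⁻¹)^k = (1 - ((p:ℝ)⁻¹)^M)/((p:ℝ) - 1) := by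
  have hp0 : (p:ℝ) ≠ 0 := by positivity
  have hp1 : (p:ℝ) - 1 ≠ 0 := by
    have : (2:ℝ) ≤ p := by exact_mod_cast hp2
    intro h; linarith
  induction M with
  | zero => simp
  | succ M ih =>
    rw [Finset.sum_Icc_succ_top (by omega), ih]
    field_simp
    linear_combination ((1:ℝ) / p) ^ M * (mul_one_div_cancel hp0)

lemma Mdiv_tendsto (p B d : ℕ) (hp2 : 2 ≤ p) (hB : 1 ≤ B) :
    Tendsto (fun n : ℕ => ((Nat.log p (B * n^d) : ℝ)) / n) atTop (nhds 0) := by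
  have hlogp : (0:ℝ) < Real.log p :=
    Real.log_pos (by exact_mod_cast Nat.lt_of_lt_of_le one_lt_two hp2)
  have h1 : Tendsto (fun n : ℕ => (Real.log B / Real.log p) * (n:ℝ)⁻¹) atTop (nhds 0) := by
    have := (tendsto_inv_atTop_zero (𝕜 := ℝ)).comp tendsto_natCast_atTop_atTop
    simpa using this.const_mul (Real.log B / Real.log p)
  have h2 : Tendsto (fun n : ℕ => ((d:ℝ) / Real.log p) * (Real.log n / n)) atTop (nhds 0) := by
    have := (Real.isLittleO_log_id_atTop.tendsto_div_nhds_zero).comp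
      (tendsto_natCast_atTop_atTop (R := ℝ))
    simpa using this.const_mul ((d:ℝ) / Real.log p)
  have hsum := h1.add h2
  rw [add_zero] at hsum
  apply tendsto_of_tendsto_of_tendsto_of_le_of_le' tendsto_const_nhds hsum
  · filter_upwards [eventually_ge_atTop 1] with n hn
    positivity
  · filter_upwards [eventually_ge_atTop 1] with n hn
    have hn0 : (0:ℝ) < n := by exact_mod_cast hn
    have hkey : (Nat.log p (B * n^d) : ℝ)
        ≤ Real.log B / Real.log p + (d:ℝ) * Real.log n / Real.log p := by
      have := Real.natLog_le_logb (B * n^d) p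
      refine this.trans ?_
      rw [Real.logb]
      have hcast : ((B * n^d : ℕ) : ℝ) = (B:ℝ) * (n:ℝ)^d := by push_cast; ring
      rw [hcast]
      rw [Real.log_mul (by positivity) (by positivity), Real.log_pow]
      rw [div_le_iff₀ hlogp]
      field_simp
      exact le_rfl
    rw [div_le_iff₀ hn0] at *
    calc (Nat.log p (B * n^d) : ℝ)
        ≤ Real.log B / Real.log p + (d:ℝ) * Real.log n / Real.log p := hkey
      _ ≤ (Real.log B / Real.log p * (n:ℝ)⁻¹ + (d:ℝ) / Real.log p * (Real.log n / n)) * n := by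
        have hlogn : 0 ≤ Real.log n := Real.log_natCast_nonneg n
        have hlogB : 0 ≤ Real.log B := Real.log_natCast_nonneg B
        have h3 : (1:ℝ) ≤ n := by exact_mod_cast hn
        rw [add_mul]
        have e1 : Real.log B / Real.log p * (n:ℝ)⁻¹ * n = Real.log B / Real.log p := by
          field_simp
        have e2 : (d:ℝ) / Real.log p * (Real.log n / n) * n = (d:ℝ) * Real.log n / Real.log p := by
          field_simp
        rw [e1, e2]

set_option maxHeartbeats 1000000 in
theorem main_theorem (Q : Polynomial ℤ) (p : ℕ) [hp : Fact p.Prime]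
    (hHensel : ∀ b : ZMod p, aeval b Q = 0 → aeval b (derivative Q) ≠ 0)
    (hne : ∀ i : ℕ, 1 ≤ i → Q.eval (i : ℤ) ≠ 0) :
    Tendsto (fun n : ℕ => (∑ i ∈ Finset.Icc 1 n, (padicValInt p (Q.eval (i : ℤ)) : ℝ)) / n)
      atTop
      (nhds (((Finset.univ.filter (fun b : ZMod p => aeval b Q = 0)).card : ℝ) / (p - 1))) := by
  have hp2 : 2 ≤ p := hp.out.two_le
  set z : ℕ := (Finset.univ.filter (fun b : ZMod p => aeval b Q = 0)).card with hz
  set d : ℕ := Q.natDegree with hd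
  set B : ℕ := ∑ j ∈ Finset.range (d + 1), (Q.coeff j).natAbs with hBdef
  have hppos : (0:ℝ) < (p:ℝ) - 1 := by
    have : (2:ℝ) ≤ p := by exact_mod_cast hp2
    linarith
  have hrpos : (0:ℝ) < (p:ℝ)⁻¹ := by
    have : (0:ℝ) < p := by positivity
    positivity
  have hr1 : ((p:ℝ))⁻¹ < 1 := by
    rw [inv_lt_one_iff₀]
    right
    exact_mod_cast Nat.lt_of_lt_of_le one_lt_two hp2
  have hQne : Q ≠ 0 := fun h => hne 1 le_rfl (by simp [h])
  have hB1 : 1 ≤ B := by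
    have h1 : Q.coeff d ≠ 0 := by
      rw [hd]
      exact Polynomial.leadingCoeff_ne_zero.mpr hQne
    have h2 : 1 ≤ (Q.coeff d).natAbs := by
      rcases Nat.eq_zero_or_pos (Q.coeff d).natAbs with h | h
      · exact absurd (Int.natAbs_eq_zero.mp h) h1
      · exact h
    rw [hBdef]
    exact le_trans h2 (Finset.single_le_sum (f := fun j => (Q.coeff j).natAbs)
      (fun j _ => Nat.zero_le _) (Finset.self_mem_range_succ d))
  have hroot : ∀ k, 1 ≤ k →
      ((Finset.range (p^k)).filter (fun b : ℕ => (p:ℤ)^k ∣ Q.eval (b:ℤ))).card = z := by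
    intro k hk
    induction k, hk using Nat.le_induction with
    | base => rw [hz]; rw [← count_base Q]; norm_num
    | succ k hk ih => rw [count_step Q hHensel k hk, ih]
  have hper : ∀ k, ∀ i j : ℕ, i % p^k = j % p^k →
      ((p:ℤ)^k ∣ Q.eval (i:ℤ) ↔ (p:ℤ)^k ∣ Q.eval (j:ℤ)) := by
    intro k i j hij
    have hmod : i ≡ j [MOD p^k] := hij
    have hd1 : ((p^k : ℕ) : ℤ) ∣ (j:ℤ) - (i:ℤ) := hmod.dvd
    push_cast at hd1
    have hd2 : (p:ℤ)^k ∣ (i:ℤ) - (j:ℤ) := by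
      have := hd1.neg_right
      rwa [neg_sub] at this
    constructor
    · intro h
      have h2 := (eval_congr Q k hd1).add h
      simpa using h2
    · intro h
      have h2 := (eval_congr Q k hd2).add h
      simpa using h2
  -- real bounds on the counts
  have hSle : ∀ k, 1 ≤ k → ∀ n : ℕ,
      (((Finset.Icc 1 n).filter (fun i : ℕ => (p:ℤ)^k ∣ Q.eval (i:ℤ))).card : ℝ)
        ≤ (z:ℝ) * n * ((p:ℝ)⁻¹)^k + z := by
    intro k hk n
    have hm : 0 < p^k := Nat.pow_pos (n := k) (by omega)
    have hb := (count_Icc_bounds (fun i : ℕ => (p:ℤ)^k ∣ Q.eval (i:ℤ)) (p^k) hm (hper k) n).2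
    rw [hroot k hk] at hb
    have hmr : (0:ℝ) < ((p^k : ℕ) : ℝ) := by exact_mod_cast hm
    have hq : ((n / p^k : ℕ) : ℝ) ≤ (n:ℝ) * ((p:ℝ)⁻¹)^k := by
      have h1 : ((n / p^k : ℕ) : ℝ) ≤ (n:ℝ) / ((p^k : ℕ) : ℝ) := Nat.cast_div_le
      have h2 : (n:ℝ) / ((p^k : ℕ) : ℝ) = (n:ℝ) * ((p:ℝ)⁻¹)^k := by
        rw [div_eq_mul_inv]
        congr 1
        push_cast
        rw [← inv_pow]
      linarith [h1, h2.le]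
    have hb' : (((Finset.Icc 1 n).filter (fun i : ℕ => (p:ℤ)^k ∣ Q.eval (i:ℤ))).card : ℝ)
        ≤ (((n / p^k : ℕ) : ℝ) + 1) * z := by
      exact_mod_cast hb
    have hz0 : (0:ℝ) ≤ z := Nat.cast_nonneg z
    nlinarith [hq, hb', hz0]
  have hSge : ∀ k, 1 ≤ k → ∀ n : ℕ,
      (z:ℝ) * n * ((p:ℝ)⁻¹)^k - z
        ≤ (((Finset.Icc 1 n).filter (fun i : ℕ => (p:ℤ)^k ∣ Q.eval (i:ℤ))).card : ℝ) := by
    intro k hk n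
    have hm : 0 < p^k := Nat.pow_pos (n := k) (by omega)
    have hb := (count_Icc_bounds (fun i : ℕ => (p:ℤ)^k ∣ Q.eval (i:ℤ)) (p^k) hm (hper k) n).1
    rw [hroot k hk] at hb
    have hmr : (0:ℝ) < ((p^k : ℕ) : ℝ) := by exact_mod_cast hm
    have hq : (n:ℝ) * ((p:ℝ)⁻¹)^k - 1 ≤ ((n / p^k : ℕ) : ℝ) := by
      have h0 := Nat.div_add_mod n (p^k)
      have h1 : n < p^k * (n / p^k) + p^k := by
        have := Nat.mod_lt n hm
        omega
      have h2 : (n:ℝ) < ((p^k : ℕ) : ℝ) * ((n / p^k : ℕ) : ℝ) + ((p^k : ℕ) : ℝ) := by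
        exact_mod_cast h1
      have h3 : (n:ℝ) * ((p:ℝ)⁻¹)^k < ((n / p^k : ℕ) : ℝ) + 1 := by
        rw [show ((p:ℝ)⁻¹)^k = (((p^k : ℕ) : ℝ))⁻¹ by push_cast; rw [← inv_pow]]
        rw [← div_eq_mul_inv, div_lt_iff₀ hmr]
        nlinarith [h2]
      linarith
    have hb' : (((n / p^k : ℕ) : ℝ)) * z
        ≤ (((Finset.Icc 1 n).filter (fun i : ℕ => (p:ℤ)^k ∣ Q.eval (i:ℤ))).card : ℝ) := by
      exact_mod_cast hb
    have hz0 : (0:ℝ) ≤ z := Nat.cast_nonneg z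
    nlinarith [hq, hb', hz0]
  -- valuation bound
  set M : ℕ → ℕ := fun n => Nat.log p (B * n^d) with hMdef
  have hMbound : ∀ n : ℕ, 1 ≤ n → ∀ i ∈ Finset.Icc 1 n, padicValInt p (Q.eval (i:ℤ)) ≤ M n := by
    intro n hn i hi
    simp only [Finset.mem_Icc] at hi
    have hQi : Q.eval (i:ℤ) ≠ 0 := hne i hi.1
    set ν := padicValInt p (Q.eval (i:ℤ)) with hν
    have hdvd : (p:ℤ)^ν ∣ Q.eval (i:ℤ) := padicValInt_dvd _
    have h1 : (p:ℤ)^ν ≤ |Q.eval (i:ℤ)| :=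
      Int.le_of_dvd (abs_pos.mpr hQi) ((dvd_abs _ _).mpr hdvd)
    have h2 := eval_abs_le Q n i hi.1 hi.2
    rw [← hd, ← hBdef] at h2
    have h3 : ((p^ν : ℕ) : ℤ) ≤ ((B * n^d : ℕ) : ℤ) := by
      push_cast
      calc ((p:ℤ))^ν ≤ |Q.eval (i:ℤ)| := h1
        _ ≤ (B:ℤ) * (n:ℤ)^d := h2
    have h4 : p^ν ≤ B * n^d := by exact_mod_cast h3
    have h5 : B * n^d ≠ 0 := by
      have : 0 < B * n^d := Nat.mul_pos hB1 (Nat.pow_pos (n := d) hn)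
      omega
    exact (Nat.le_log_iff_pow_le (by omega) h5).mpr h4
  -- upper bound on the sum
  have hcast_sum : ∀ n : ℕ, (∑ i ∈ Finset.Icc 1 n, (padicValInt p (Q.eval (i:ℤ)) : ℝ))
      = ((∑ i ∈ Finset.Icc 1 n, padicValInt p (Q.eval (i:ℤ)) : ℕ) : ℝ) := by
    intro n; push_cast; rfl
  have hupper : ∀ n : ℕ, 1 ≤ n →
      (∑ i ∈ Finset.Icc 1 n, (padicValInt p (Q.eval (i:ℤ)) : ℝ))
        ≤ (z:ℝ) * n / ((p:ℝ) - 1) + z * M n := by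
    intro n hn
    rw [hcast_sum n,
      sum_val_eq p Q n (M n) (fun i hi => hne i (Finset.mem_Icc.mp hi).1) (hMbound n hn)]
    push_cast
    calc ∑ k ∈ Finset.Icc 1 (M n),
          ((((Finset.Icc 1 n).filter (fun i : ℕ => (p:ℤ)^k ∣ Q.eval (i:ℤ))).card : ℝ))
        ≤ ∑ k ∈ Finset.Icc 1 (M n), ((z:ℝ) * n * ((p:ℝ)⁻¹)^k + z) := by
          apply Finset.sum_le_sum
          intro k hk
          exact hSle k (Finset.mem_Icc.mp hk).1 n
      _ = (z:ℝ) * n * (∑ k ∈ Finset.Icc 1 (M n), ((p:ℝ)⁻¹)^k) + z * M n := by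
          rw [Finset.sum_add_distrib, ← Finset.mul_sum, Finset.sum_const, Nat.card_Icc]
          simp only [nsmul_eq_mul, Nat.add_sub_cancel]
          ring
      _ = (z:ℝ) * n * ((1 - ((p:ℝ)⁻¹)^(M n))/((p:ℝ) - 1)) + z * M n := by
          rw [geom_Icc p hp2 (M n)]
      _ ≤ (z:ℝ) * n / ((p:ℝ) - 1) + z * M n := by
          have h1 : (0:ℝ) ≤ ((p:ℝ)⁻¹)^(M n) := by positivity
          have h2 : (0:ℝ) ≤ (z:ℝ) * n := by positivity
          have h3 : (1 - ((p:ℝ)⁻¹)^(M n))/((p:ℝ) - 1) ≤ 1 / ((p:ℝ) - 1) := by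
            gcongr
            linarith [pow_nonneg hrpos.le (M n)]
          have h4 := mul_le_mul_of_nonneg_left h3 h2
          rw [mul_one_div] at h4
          linarith
  -- lower bound on the sum
  have hlower : ∀ K n : ℕ, 1 ≤ n →
      (z:ℝ) * n * ((1 - ((p:ℝ)⁻¹)^K)/((p:ℝ) - 1)) - z * K
        ≤ ∑ i ∈ Finset.Icc 1 n, (padicValInt p (Q.eval (i:ℤ)) : ℝ) := by
    intro K n hn
    rw [hcast_sum n]
    have hge := sum_val_ge p Q n K (fun i hi => hne i (Finset.mem_Icc.mp hi).1)
    have hge' : (↑(∑ k ∈ Finset.Icc 1 K,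
        ((Finset.Icc 1 n).filter (fun i : ℕ => (p:ℤ)^k ∣ Q.eval (i:ℤ))).card) : ℝ)
        ≤ ((∑ i ∈ Finset.Icc 1 n, padicValInt p (Q.eval (i:ℤ)) : ℕ) : ℝ) := by
      exact_mod_cast hge
    refine le_trans ?_ hge'
    push_cast
    calc (z:ℝ) * n * ((1 - ((p:ℝ)⁻¹)^K)/((p:ℝ) - 1)) - z * K
        = ∑ k ∈ Finset.Icc 1 K, ((z:ℝ) * n * ((p:ℝ)⁻¹)^k - z) := by
          rw [Finset.sum_sub_distrib, ← Finset.mul_sum, Finset.sum_const, Nat.card_Icc,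
            geom_Icc p hp2 K]
          simp only [nsmul_eq_mul, Nat.add_sub_cancel]
          ring
      _ ≤ ∑ k ∈ Finset.Icc 1 K,
          ((((Finset.Icc 1 n).filter (fun i : ℕ => (p:ℤ)^k ∣ Q.eval (i:ℤ))).card : ℝ)) := by
          apply Finset.sum_le_sum
          intro k hk
          exact hSge k (Finset.mem_Icc.mp hk).1 n
  -- final epsilon argument
  rw [Metric.tendsto_atTop]
  intro ε hε
  obtain ⟨K, hK⟩ := exists_pow_lt_of_lt_one
    (show (0:ℝ) < (ε/2) * ((p:ℝ)-1) / (z+1) from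
      div_pos (mul_pos (half_pos hε) hppos) (by positivity)) hr1
  have hKε : (z:ℝ) * ((p:ℝ)⁻¹)^K / ((p:ℝ)-1) < ε/2 := by
    rw [div_lt_iff₀ hppos]
    have h1 : (0:ℝ) < ((p:ℝ)⁻¹)^K := by positivity
    have h2 : (0:ℝ) ≤ (z:ℝ) := Nat.cast_nonneg z
    have h3 : (z:ℝ) + 1 > 0 := by positivity
    have h4 : (z:ℝ) * ((p:ℝ)⁻¹)^K ≤ ((z:ℝ)+1) * ((p:ℝ)⁻¹)^K := by nlinarith
    have h5 : ((z:ℝ)+1) * ((p:ℝ)⁻¹)^K < ((z:ℝ)+1) * ((ε/2) * ((p:ℝ)-1) / (z+1)) := by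
      exact mul_lt_mul_of_pos_left hK h3
    have h6 : ((z:ℝ)+1) * ((ε/2) * ((p:ℝ)-1) / (z+1)) = ε/2 * ((p:ℝ)-1) := by
      field_simp
    linarith
  have ht1 : Tendsto (fun n : ℕ => (z:ℝ) * (((M n : ℕ) : ℝ)/n)) atTop (nhds 0) := by
    have := (Mdiv_tendsto p B d hp2 hB1).const_mul (z:ℝ)
    simpa [hMdef] using this
  obtain ⟨N1, hN1⟩ := (Metric.tendsto_atTop.mp ht1) (ε/2) (by linarith)
  have ht2 : Tendsto (fun n : ℕ => ((z:ℝ) * K)/n) atTop (nhds 0) :=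
    tendsto_const_div_atTop_nhds_zero_nat _
  obtain ⟨N2, hN2⟩ := (Metric.tendsto_atTop.mp ht2) (ε/2) (by linarith)
  refine ⟨max (max N1 N2) 1, fun n hn => ?_⟩
  have hn1 : 1 ≤ n := le_trans (le_max_right _ _) hn
  have hnN1 : N1 ≤ n := le_trans (le_trans (le_max_left _ _) (le_max_left _ _)) hn
  have hnN2 : N2 ≤ n := le_trans (le_trans (le_max_right _ _) (le_max_left _ _)) hn
  have hnpos : (0:ℝ) < n := by exact_mod_cast hn1
  have hMn : (z:ℝ) * (((M n : ℕ) : ℝ)/n) < ε/2 := by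
    have := hN1 n hnN1
    rw [Real.dist_eq, sub_zero] at this
    have habs : (0:ℝ) ≤ (z:ℝ) * (((M n : ℕ) : ℝ)/n) := by positivity
    rwa [abs_of_nonneg habs] at this
  have hKn : ((z:ℝ) * K)/n < ε/2 := by
    have := hN2 n hnN2
    rw [Real.dist_eq, sub_zero] at this
    have habs : (0:ℝ) ≤ ((z:ℝ) * K)/n := by positivity
    rwa [abs_of_nonneg habs] at this
  rw [Real.dist_eq, abs_sub_lt_iff]
  set A : ℝ := (∑ i ∈ Finset.Icc 1 n, (padicValInt p (Q.eval (i:ℤ)) : ℝ)) / n with hA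
  have hAz : A * n = ∑ i ∈ Finset.Icc 1 n, (padicValInt p (Q.eval (i:ℤ)) : ℝ) := by
    rw [hA, div_mul_cancel₀]
    exact ne_of_gt hnpos
  constructor
  · -- A - T < ε
    have h1 := hupper n hn1
    have h2 : A ≤ (z:ℝ) / ((p:ℝ) - 1) + (z:ℝ) * (((M n : ℕ) : ℝ)/n) := by
      rw [hA, div_le_iff₀ hnpos]
      calc (∑ i ∈ Finset.Icc 1 n, (padicValInt p (Q.eval (i:ℤ)) : ℝ))
          ≤ (z:ℝ) * n / ((p:ℝ) - 1) + z * M n := h1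
        _ = ((z:ℝ) / ((p:ℝ) - 1) + (z:ℝ) * (((M n : ℕ) : ℝ)/n)) * n := by
            field_simp
    linarith
  · -- T - A < ε
    have h1 := hlower K n hn1
    have h2 : (z:ℝ) / ((p:ℝ) - 1) - (z:ℝ) * ((p:ℝ)⁻¹)^K / ((p:ℝ)-1) - ((z:ℝ) * K)/n ≤ A := by
      rw [hA, le_div_iff₀ hnpos]
      calc ((z:ℝ) / ((p:ℝ) - 1) - (z:ℝ) * ((p:ℝ)⁻¹)^K / ((p:ℝ)-1) - ((z:ℝ) * K)/n) * n
          = (z:ℝ) * n * ((1 - ((p:ℝ)⁻¹)^K)/((p:ℝ) - 1)) - z * K := by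
            field_simp
        _ ≤ ∑ i ∈ Finset.Icc 1 n, (padicValInt p (Q.eval (i:ℤ)) : ℝ) := h1
    linarith
end

section
/- Let H(x) = x^4 - x^3 + 3x^2 - 3x + 3. Then (1/n) Σ_{i=1}^{n} ν_3(H(i)) tends to 5/6 as n → ∞. -/
open Filter Finset

private def Hf (x : ℤ) : ℤ := x^4 - x^3 + 3*x^2 - 3*x + 3
private def Hd (x : ℤ) : ℤ := 4*x^3 - 3*x^2 + 6*x - 3
private def HR (x d : ℤ) : ℤ := 6*x^2 - 3*x + 3 + d*(4*x-1) + d^2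

private lemma taylor (x d : ℤ) : Hf (x + d) = Hf x + d * (Hd x + d * HR x d) := by
  simp only [Hf, Hd, HR]; ring

private lemma dvd3_iff (a : ℤ) : (3:ℤ) ∣ a ↔ ((a : ZMod 3) = 0) := by
  rw [ZMod.intCast_zmod_eq_zero_iff_dvd]; norm_num

private lemma dvd9_iff (a : ℤ) : (9:ℤ) ∣ a ↔ ((a : ZMod 9) = 0) := by
  rw [ZMod.intCast_zmod_eq_zero_iff_dvd]; norm_num

private lemma Hf_pos (x : ℤ) : 0 < Hf x := by
  have h1 : 0 ≤ x^3 * (x - 1) := by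
    rcases le_or_gt x 0 with h | h
    · have hx3 : x^3 ≤ 0 := Odd.pow_nonpos (by decide) h
      nlinarith
    · have : 1 ≤ x := h
      have : 0 ≤ x^3 := by positivity
      nlinarith
  have h2 : x ≤ x^2 := by nlinarith [sq_nonneg x, sq_nonneg (x-1)]
  simp only [Hf]; nlinarith

private lemma castHf (x : ℤ) (n : ℕ) : ((Hf x : ℤ) : ZMod n)
    = (x:ZMod n)^4 - (x:ZMod n)^3 + 3*(x:ZMod n)^2 - 3*(x:ZMod n) + 3 := by
  simp only [Hf]; push_cast; ring

private lemma mod3_iff (x : ℤ) : (3:ℤ) ∣ Hf x ↔ ¬ (3:ℤ) ∣ x - 2 := by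
  have key : ∀ z : ZMod 3, (z^4 - z^3 + 3*z^2 - 3*z + 3 = 0) ↔ ¬(z - 2 = 0) := by decide
  rw [dvd3_iff, dvd3_iff, castHf]
  push_cast
  exact key (x : ZMod 3)

private lemma mod9_imp (x : ℤ) (h : (9:ℤ) ∣ Hf x) : (3:ℤ) ∣ x - 1 := by
  have key : ∀ z : ZMod 9, (z^4 - z^3 + 3*z^2 - 3*z + 3 = 0) →
      (ZMod.castHom (show (3:ℕ) ∣ 9 by norm_num) (ZMod 3) z - 1 = 0) := by decide
  rw [dvd9_iff, castHf] at h
  have h3 := key _ h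
  rw [map_intCast] at h3
  rw [dvd3_iff]
  push_cast
  exact h3

private lemma Hd_unit (x : ℤ) (hx : (3:ℤ) ∣ x - 1) (d : ℤ) (hd : (3:ℤ) ∣ d) :
    ¬ (3:ℤ) ∣ (Hd x + d * HR x d) := by
  have key : ∀ z w : ZMod 3, z - 1 = 0 → w = 0 →
      ¬((4*z^3 - 3*z^2 + 6*z - 3) + w * (6*z^2 - 3*z + 3 + w*(4*z-1) + w^2) = 0) := by decide
  intro hcon
  rw [dvd3_iff] at hx hd hcon
  push_cast at hx
  simp only [Hd, HR] at hcon
  push_cast at hcon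
  exact key (x : ZMod 3) (d : ZMod 3) (by linear_combination hx) hd (by linear_combination hcon)

private lemma Hd_one (x : ℤ) (hx : (3:ℤ) ∣ x - 1) : (3:ℤ) ∣ Hd x - 1 := by
  have key : ∀ z : ZMod 3, z - 1 = 0 → (4*z^3 - 3*z^2 + 6*z - 3) - 1 = 0 := by decide
  rw [dvd3_iff] at hx ⊢
  push_cast at hx ⊢
  simp only [Hd]
  have := key (x : ZMod 3) (by linear_combination hx)
  push_cast
  linear_combination this

private def aSeq : ℕ → ℤ
  | 0 => 1
  | k+1 => aSeq k - Hf (aSeq k)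

private lemma aSeq_inv (k : ℕ) : (3:ℤ) ∣ aSeq k - 1 ∧ (3:ℤ)^(k+1) ∣ Hf (aSeq k) := by
  induction k with
  | zero => refine ⟨by simp [aSeq], ?_⟩; simp [aSeq, Hf]
  | succ k ih =>
    obtain ⟨h1, h2⟩ := ih
    set a := aSeq k with ha
    have hstep : aSeq (k+1) = a + (-(Hf a)) := by simp [aSeq, ← ha]; ring
    have h3 : (3:ℤ) ∣ Hf a := dvd_trans (dvd_pow_self 3 (Nat.succ_ne_zero k)) h2
    constructor
    · rw [hstep]
      have : a + -(Hf a) - 1 = (a - 1) - Hf a := by ring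
      rw [this]
      exact dvd_sub h1 h3
    · rw [hstep, taylor]
      have e1 : Hf a + (-(Hf a)) * (Hd a + (-(Hf a)) * HR a (-(Hf a)))
          = Hf a * (1 - Hd a) + (Hf a) * (Hf a * HR a (-(Hf a))) := by ring
      rw [e1]
      apply dvd_add
      · have h4 : (3:ℤ) ∣ 1 - Hd a := by
          have := Hd_one a h1; omega
        calc (3:ℤ)^(k+2) = 3^(k+1) * 3 := by ring
        _ ∣ Hf a * (1 - Hd a) := mul_dvd_mul h2 h4
      · calc (3:ℤ)^(k+2) ∣ (3:ℤ)^(k+1) * 3^(k+1) := by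
              rw [← pow_add]; exact pow_dvd_pow 3 (by omega)
        _ ∣ Hf a * (Hf a * HR a (-(Hf a))) := mul_dvd_mul h2 (Dvd.dvd.mul_right h2 _)

private lemma key_equiv (k : ℕ) (i : ℤ) :
    (3:ℤ)^(k+2) ∣ Hf i ↔ (3:ℤ)^(k+2) ∣ i - aSeq (k+1) := by
  obtain ⟨ha1, ha2⟩ := aSeq_inv (k+1)
  set a := aSeq (k+1) with ha
  have hia : Hf i = Hf a + (i - a) * (Hd a + (i - a) * HR a (i - a)) := by
    have := taylor a (i - a); rw [show a + (i - a) = i by ring] at this; exact this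
  constructor
  · intro h
    have h9 : (9:ℤ) ∣ Hf i := by
      refine dvd_trans ?_ h
      calc (9:ℤ) = 3^2 := by norm_num
      _ ∣ 3^(k+2) := pow_dvd_pow 3 (by omega)
    have hi1 : (3:ℤ) ∣ i - 1 := mod9_imp i h9
    have hd3 : (3:ℤ) ∣ i - a := by
      have : i - a = (i - 1) - (a - 1) := by ring
      rw [this]; exact dvd_sub hi1 ha1
    have hu : ¬ (3:ℤ) ∣ (Hd a + (i - a) * HR a (i - a)) := Hd_unit a ha1 _ hd3
    have hcop : IsCoprime ((3:ℤ)^(k+2)) (Hd a + (i - a) * HR a (i - a)) :=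
      (Int.prime_three.coprime_iff_not_dvd.mpr hu).pow_left
    have hdvd : (3:ℤ)^(k+2) ∣ (i - a) * (Hd a + (i - a) * HR a (i - a)) := by
      have h' := h
      rw [hia] at h'
      have h2 := dvd_sub h' ha2
      simpa using h2
    exact hcop.dvd_of_dvd_mul_right hdvd
  · intro h
    rw [hia]
    exact dvd_add ha2 (Dvd.dvd.mul_right h _)

private lemma nat_int_filter_card (n : ℕ) (P : ℤ → Prop) [DecidablePred P] :
    #{x ∈ Finset.Icc 1 n | P ((x:ℕ):ℤ)} = #{y ∈ Finset.Ioc (0:ℤ) (n:ℤ) | P y} := by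
  apply Finset.card_nbij (fun x : ℕ => (x:ℤ))
  · intro x hx
    simp only [Finset.mem_coe, Finset.mem_filter, Finset.mem_Icc, Finset.mem_Ioc] at *
    refine ⟨⟨by exact_mod_cast hx.1.1, by exact_mod_cast hx.1.2⟩, hx.2⟩
  · intro x hx y hy hxy
    simp only at hxy; exact_mod_cast hxy
  · intro y hy
    simp only [Finset.mem_coe, Finset.mem_filter, Finset.mem_Ioc] at hy
    obtain ⟨⟨hy1, hy2⟩, hyP⟩ := hy
    have hyt : ((y.toNat:ℕ):ℤ) = y := Int.toNat_of_nonneg (by omega)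
    refine ⟨y.toNat, ?_, hyt⟩
    simp only [Finset.mem_coe, Finset.mem_filter, Finset.mem_Icc, hyt]
    exact ⟨⟨by omega, by omega⟩, hyP⟩

private lemma count_bound (r : ℕ) (hr : 0 < r) (v : ℤ) (n : ℕ) :
    ((n:ℚ)/r - 1 ≤ (#{x ∈ Finset.Icc 1 n | ((x:ℕ):ℤ) ≡ v [ZMOD r]} : ℚ))
    ∧ ((#{x ∈ Finset.Icc 1 n | ((x:ℕ):ℤ) ≡ v [ZMOD r]} : ℚ) ≤ (n:ℚ)/r + 1) := by
  rw [nat_int_filter_card n (· ≡ v [ZMOD r])]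
  have hr' : (0:ℤ) < r := by exact_mod_cast hr
  have hrq : (0:ℚ) < r := by exact_mod_cast hr
  have hcard := Int.Ioc_filter_modEq_card 0 (n:ℤ) hr' v
  push_cast at hcard
  set A := ⌊((n:ℚ) - (v:ℚ)) / (r : ℚ)⌋ with hA
  set B := ⌊(0 - (v:ℚ)) / (r : ℚ)⌋ with hB
  have hAB : B ≤ A := by
    apply Int.floor_le_floor
    have hn : (0:ℚ) ≤ (n:ℚ) := by positivity
    gcongr
  rw [max_eq_left (by omega)] at hcard
  have hcq : ((#{y ∈ Finset.Ioc (0:ℤ) (n:ℤ) | y ≡ v [ZMOD r]} : ℕ) : ℚ) = (A:ℚ) - (B:ℚ) := by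
    exact_mod_cast hcard
  have h1 : (A:ℚ) ≤ ((n:ℚ) - (v:ℚ)) / r := Int.floor_le _
  have h2 : ((n:ℚ) - (v:ℚ)) / r < A + 1 := Int.lt_floor_add_one _
  have h3 : (B:ℚ) ≤ (0 - (v:ℚ)) / r := Int.floor_le _
  have h4 : (0 - (v:ℚ)) / r < B + 1 := Int.lt_floor_add_one _
  have h5 : ((n:ℚ) - (v:ℚ)) / r - (0 - (v:ℚ)) / r = (n:ℚ)/r := by
    field_simp; ring
  constructor <;> rw [hcq] <;> linarith

private def Kn (n : ℕ) : ℕ := Nat.log 3 (7 * n^4) + 1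

private lemma val_lt (n i : ℕ) (h1 : 1 ≤ i) (h2 : i ≤ n) : padicValInt 3 (Hf i) < Kn n := by
  haveI : Fact (Nat.Prime 3) := ⟨by norm_num⟩
  set ν := padicValInt 3 (Hf i) with hν
  have hdvd : (3:ℤ)^ν ∣ Hf i := padicValInt_dvd (Hf i)
  have hle : (3:ℤ)^ν ≤ Hf i := Int.le_of_dvd (Hf_pos _) hdvd
  have hi1 : (1:ℤ) ≤ (i:ℤ) := by exact_mod_cast h1
  have hin : (i:ℤ) ≤ (n:ℤ) := by exact_mod_cast h2
  have hbound : Hf (i:ℤ) ≤ 7 * (n:ℤ)^4 := by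
    have h4 : (i:ℤ)^4 ≤ (n:ℤ)^4 := pow_le_pow_left₀ (by linarith) hin 4
    have e1 : (1:ℤ) ≤ (i:ℤ)^4 := one_le_pow₀ hi1
    have e2 : (i:ℤ)^2 ≤ (i:ℤ)^4 := pow_le_pow_right₀ hi1 (by norm_num)
    have e3 : (0:ℤ) ≤ (i:ℤ)^3 := by positivity
    have e4 : (0:ℤ) ≤ (i:ℤ) := by linarith
    simp only [Hf]; linarith
  have hnat : (3:ℕ)^ν ≤ 7 * n^4 := by exact_mod_cast le_trans hle hbound
  have hn1 : 1 ≤ n := le_trans h1 h2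
  have hn4 : 1 ≤ n^4 := Nat.one_le_pow _ _ (by omega)
  have hne : 7 * n^4 ≠ 0 := by omega
  have := (Nat.le_log_iff_pow_le (by norm_num) hne).mpr hnat
  simp only [Kn]; omega

private lemma val_eq_sum (n i : ℕ) (h1 : 1 ≤ i) (h2 : i ≤ n) :
    padicValInt 3 (Hf i) = ∑ k ∈ Finset.Icc 1 (Kn n), (if (3:ℤ)^k ∣ Hf i then 1 else 0) := by
  haveI : Fact (Nat.Prime 3) := ⟨by norm_num⟩
  set ν := padicValInt 3 (Hf i) with hν
  have hlt := val_lt n i h1 h2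
  have hne : Hf (i:ℤ) ≠ 0 := (Hf_pos _).ne'
  have hiff : ∀ k : ℕ, ((3:ℤ)^k ∣ Hf i) ↔ k ≤ ν := by
    intro k
    rw [show ((3:ℤ) = ((3:ℕ):ℤ)) by norm_num, padicValInt_dvd_iff]
    simp [hne]; exact Iff.rfl
  have hc : ∀ k ∈ Finset.Icc 1 (Kn n), (if (3:ℤ)^k ∣ Hf i then 1 else 0) = (if k ≤ ν then 1 else 0) := by
    intro k _; simp [hiff k]
  have hfil : Finset.filter (fun k => k ≤ ν) (Finset.Icc 1 (Kn n)) = Finset.Icc 1 ν := by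
    ext k; simp only [Finset.mem_filter, Finset.mem_Icc]; omega
  rw [Finset.sum_congr rfl hc, Finset.sum_boole, hfil]
  simp [Nat.card_Icc]

private lemma main_bound (n : ℕ) (hn : 1 ≤ n) :
    |((∑ i ∈ Finset.Icc 1 n, padicValInt 3 (Hf i) : ℕ) : ℚ) - 5/6 * n| ≤ (Kn n : ℚ) + 1 := by
  haveI : Fact (Nat.Prime 3) := ⟨by norm_num⟩
  set K := Kn n with hK
  have hn4 : 1 ≤ n^4 := Nat.one_le_pow _ _ (by omega)
  have hK2 : 2 ≤ K := by
    have h3 : (3:ℕ)^1 ≤ 7 * n^4 := by omega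
    have := (Nat.le_log_iff_pow_le (by norm_num) (by omega)).mpr h3
    simp only [hK, Kn]; omega
  -- step 1 : sum of valuations = sum of counts
  have hS : (∑ i ∈ Finset.Icc 1 n, padicValInt 3 (Hf i))
      = ∑ k ∈ Finset.Icc 1 K, #{x ∈ Finset.Icc 1 n | (3:ℤ)^k ∣ Hf ((x:ℕ):ℤ)} := by
    rw [Finset.sum_congr rfl (fun i hi => val_eq_sum n i (Finset.mem_Icc.mp hi).1 (Finset.mem_Icc.mp hi).2)]
    rw [Finset.sum_comm]
    exact Finset.sum_congr rfl (fun k _ => by rw [Finset.sum_boole]; simp)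
  -- k = 1 count
  have hfe1 : {x ∈ Finset.Icc 1 n | (3:ℤ)^1 ∣ Hf ((x:ℕ):ℤ)}
      = {x ∈ Finset.Icc 1 n | ¬ (((x:ℕ):ℤ) ≡ 2 [ZMOD (3:ℕ)])} := by
    apply Finset.filter_congr; intro x _
    rw [pow_one, mod3_iff]
    have heq : ((x:ℤ) ≡ 2 [ZMOD (3:ℕ)]) ↔ (3:ℤ) ∣ (x:ℤ) - 2 := by
      rw [Int.modEq_iff_dvd, dvd_sub_comm]; norm_num
    rw [heq]
  have hr2 := count_bound 3 (by norm_num) 2 n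
  have hsplit := Finset.card_filter_add_card_filter_not
    (s := Finset.Icc 1 n) (p := fun x : ℕ => (((x:ℕ):ℤ) ≡ 2 [ZMOD (3:ℕ)]))
  rw [Nat.card_Icc] at hsplit
  have hr2n : #{x ∈ Finset.Icc 1 n | ((x:ℕ):ℤ) ≡ 2 [ZMOD (3:ℕ)]} ≤ n := by omega
  have hc1 : ((#{x ∈ Finset.Icc 1 n | (3:ℤ)^1 ∣ Hf ((x:ℕ):ℤ)}):ℚ)
      = (n:ℚ) - (#{x ∈ Finset.Icc 1 n | ((x:ℕ):ℤ) ≡ 2 [ZMOD (3:ℕ)]} : ℚ) := by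
    rw [hfe1]
    have : #{x ∈ Finset.Icc 1 n | ¬ (((x:ℕ):ℤ) ≡ 2 [ZMOD (3:ℕ)])}
        = n - #{x ∈ Finset.Icc 1 n | ((x:ℕ):ℤ) ≡ 2 [ZMOD (3:ℕ)]} := by omega
    rw [this, Nat.cast_sub hr2n]
  have hq3 : ((3:ℕ):ℚ) = 3 := by norm_num
  rw [hq3] at hr2
  have hc1b : |((#{x ∈ Finset.Icc 1 n | (3:ℤ)^1 ∣ Hf ((x:ℕ):ℤ)}):ℚ) - 2/3 * n| ≤ 1 := by
    rw [hc1, abs_le]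
    constructor <;> linarith [hr2.1, hr2.2]
  -- k ≥ 2 counts
  have hck : ∀ k ∈ Finset.Icc 2 K,
      |(#{x ∈ Finset.Icc 1 n | (3:ℤ)^k ∣ Hf ((x:ℕ):ℤ)} : ℚ) - (n:ℚ)*(1/3)^k| ≤ 1 := by
    intro k hk
    obtain ⟨j, rfl⟩ : ∃ j, k = j + 2 := ⟨k - 2, by have := Finset.mem_Icc.mp hk; omega⟩
    have hcast : ((3^(j+2):ℕ):ℤ) = (3:ℤ)^(j+2) := by push_cast; ring
    have hfe : {x ∈ Finset.Icc 1 n | (3:ℤ)^(j+2) ∣ Hf ((x:ℕ):ℤ)}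
        = {x ∈ Finset.Icc 1 n | ((x:ℕ):ℤ) ≡ aSeq (j+1) [ZMOD ((3^(j+2):ℕ))]} := by
      apply Finset.filter_congr; intro x _
      rw [key_equiv]
      have heq : ((x:ℤ) ≡ aSeq (j+1) [ZMOD ((3^(j+2):ℕ))]) ↔ (3:ℤ)^(j+2) ∣ (x:ℤ) - aSeq (j+1) := by
        rw [Int.modEq_iff_dvd, dvd_sub_comm, hcast]
      rw [heq]
    rw [hfe]
    have hb := count_bound (3^(j+2)) (by positivity) (aSeq (j+1)) n
    have hcq : ((3^(j+2):ℕ):ℚ) = (3:ℚ)^(j+2) := by push_cast; ring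
    rw [hcq] at hb
    have hmm : (n:ℚ)*(1/3)^(j+2) = (n:ℚ)/3^(j+2) := by
      rw [one_div, inv_pow, div_eq_mul_inv]
    rw [hmm, abs_le]
    constructor <;> linarith [hb.1, hb.2]
  -- split the sum over k
  have hins : Finset.Icc 1 K = insert 1 (Finset.Icc 2 K) := by
    ext k; simp only [Finset.mem_insert, Finset.mem_Icc]; omega
  have hnotmem : (1:ℕ) ∉ Finset.Icc 2 K := by simp
  have hSq : ((∑ i ∈ Finset.Icc 1 n, padicValInt 3 (Hf i) : ℕ) : ℚ)
      = (#{x ∈ Finset.Icc 1 n | (3:ℤ)^1 ∣ Hf ((x:ℕ):ℤ)} : ℚ)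
        + ∑ k ∈ Finset.Icc 2 K, (#{x ∈ Finset.Icc 1 n | (3:ℤ)^k ∣ Hf ((x:ℕ):ℤ)} : ℚ) := by
    rw [hS, hins, Finset.sum_insert hnotmem]
    push_cast
    ring
  -- geometric sum
  have hgeom : ∑ k ∈ Finset.Icc 2 K, (n:ℚ)*(1/3)^k
      = (n:ℚ)/6 - ((n:ℚ)*(1/3)^K)/2 := by
    rw [← Finset.mul_sum]
    have hg : ∑ k ∈ Finset.Icc 2 K, ((1:ℚ)/3)^k = 1/6 - (1/3)^K/2 := by
      rw [← Finset.Ico_add_one_right_eq_Icc, geom_sum_Ico (by norm_num) (by omega), pow_succ]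
      rw [div_eq_iff (show (1/3 - 1 : ℚ) ≠ 0 by norm_num)]
      ring
    rw [hg]; ring
  -- error bound for the sum over k ≥ 2
  have hsum2 : |∑ k ∈ Finset.Icc 2 K, (#{x ∈ Finset.Icc 1 n | (3:ℤ)^k ∣ Hf ((x:ℕ):ℤ)} : ℚ)
      - ∑ k ∈ Finset.Icc 2 K, (n:ℚ)*(1/3)^k| ≤ (K:ℚ) - 1 := by
    rw [← Finset.sum_sub_distrib]
    refine le_trans (Finset.abs_sum_le_sum_abs _ _) ?_
    refine le_trans (Finset.sum_le_sum hck) ?_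
    rw [Finset.sum_const, Nat.card_Icc]
    have hcc : ((K + 1 - 2 : ℕ):ℚ) = (K:ℚ) - 1 := by
      have h : K + 1 - 2 = K - 1 := by omega
      rw [h, Nat.cast_sub (by omega)]; norm_num
    simp only [nsmul_eq_mul, mul_one]
    rw [hcc]
  rw [hgeom] at hsum2
  -- tail bound
  have htail0 : (0:ℚ) ≤ (n:ℚ)*(1/3)^K := by positivity
  have htail1 : (n:ℚ)*(1/3)^K ≤ 1 := by
    have h1 : n ≤ 7*n^4 := by nlinarith [Nat.le_self_pow (show (4:ℕ) ≠ 0 by norm_num) n]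
    have h2 : 7*n^4 < 3^K := by
      rw [hK]; exact Nat.lt_pow_succ_log_self (by norm_num) _
    have h3 : (n:ℚ) ≤ (3:ℚ)^K := by
      have h4 : (n:ℕ) < 3^K := by omega
      exact_mod_cast h4.le
    rw [one_div, inv_pow, mul_inv_le_iff₀ (by positivity)]
    linarith
  have habs2 := abs_le.mp hsum2
  have habs1 := abs_le.mp hc1b
  rw [hSq, abs_le]
  constructor
  · linarith [habs1.1, habs2.1]
  · linarith [habs1.2, habs2.2]

private lemma log_growth (n : ℕ) (hn : 1 ≤ n) : Kn n + 1 ≤ 4 * Nat.log 3 n + 7 := by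
  set L := Nat.log 3 n with hL
  have hn4 : 1 ≤ n^4 := Nat.one_le_pow _ _ (by omega)
  have h1 : n < 3^(L+1) := Nat.lt_pow_succ_log_self (by norm_num) n
  have h2 : n^4 < (3^(L+1))^4 := Nat.pow_lt_pow_left h1 (by norm_num)
  have h3 : ((3:ℕ)^(L+1))^4 = 3^(4*L+4) := by
    rw [← pow_mul]; congr 1; ring
  have h4 : 7*n^4 < 3^(4*L+6) := by
    calc 7*n^4 < 7*(3^(L+1))^4 := by omega
    _ = 7*3^(4*L+4) := by rw [h3]
    _ ≤ 9*3^(4*L+4) := by omega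
    _ = 3^(4*L+6) := by rw [show 4*L+6 = (4*L+4)+2 by ring, pow_add]; ring
  have h5 : Nat.log 3 (7*n^4) < 4*L+6 :=
    (Nat.log_lt_iff_lt_pow (by norm_num) (by omega)).mpr h4
  simp only [Kn]; omega

theorem val3_H_asymptotic :
    Tendsto (fun n : ℕ =>
        (∑ i ∈ Finset.Icc 1 n,
          (padicValInt 3 ((i : ℤ) ^ 4 - i ^ 3 + 3 * i ^ 2 - 3 * i + 3) : ℝ)) / n)
      atTop (nhds (5 / 6)) := by
  set f : ℕ → ℝ := fun n =>
      (∑ i ∈ Finset.Icc 1 n,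
        (padicValInt 3 ((i : ℤ) ^ 4 - i ^ 3 + 3 * i ^ 2 - 3 * i + 3) : ℝ)) / n with hf
  have hlog3 : (0:ℝ) < Real.log 3 := Real.log_pos (by norm_num)
  have hbound : ∀ n : ℕ, 1 ≤ n →
      |f n - 5/6| ≤ ((4 * Nat.log 3 n + 7 : ℕ) : ℝ) / n := by
    intro n hn
    have hnR : (0:ℝ) < (n:ℝ) := by exact_mod_cast hn
    have hq := main_bound n hn
    have hr : |((∑ i ∈ Finset.Icc 1 n, padicValInt 3 (Hf i) : ℕ) : ℝ) - 5/6 * n|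
        ≤ (Kn n : ℝ) + 1 := by
      have hqR := (Rat.cast_le (K := ℝ)).mpr hq
      push_cast at hqR
      push_cast; exact hqR
    have hsum : (∑ i ∈ Finset.Icc 1 n,
          (padicValInt 3 ((i : ℤ) ^ 4 - i ^ 3 + 3 * i ^ 2 - 3 * i + 3) : ℝ))
        = ((∑ i ∈ Finset.Icc 1 n, padicValInt 3 (Hf i) : ℕ) : ℝ) := by
      push_cast
      rfl
    have hfn : f n - 5/6
        = (((∑ i ∈ Finset.Icc 1 n, padicValInt 3 (Hf i) : ℕ) : ℝ) - 5/6 * n) / n := by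
      rw [hf]
      simp only [hsum]
      field_simp
    rw [hfn, abs_div, abs_of_pos hnR]
    have hKlog : ((Kn n : ℝ) + 1) ≤ ((4 * Nat.log 3 n + 7 : ℕ) : ℝ) := by
      have := log_growth n hn
      push_cast
      exact_mod_cast this
    gcongr
    exact le_trans hr hKlog
  have hg0 : Tendsto (fun n:ℕ => (4/Real.log 3) * (Real.log n / n) + 7/n) atTop (nhds 0) := by
    have t1 : Tendsto (fun x:ℝ => Real.log x / x) atTop (nhds 0) :=
      Real.isLittleO_log_id_atTop.tendsto_div_nhds_zero
    have t2 : Tendsto (fun n:ℕ => Real.log n / n) atTop (nhds 0) :=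
      t1.comp tendsto_natCast_atTop_atTop
    have t3 := t2.const_mul (4/Real.log 3)
    have t4 : Tendsto (fun n:ℕ => (7:ℝ)/n) atTop (nhds 0) :=
      tendsto_const_div_atTop_nhds_zero_nat 7
    simpa using t3.add t4
  have hev : ∀ᶠ n : ℕ in atTop, |f n - 5/6| ≤ (4/Real.log 3) * (Real.log n / n) + 7/n := by
    filter_upwards [eventually_ge_atTop 1] with n hn
    refine le_trans (hbound n hn) ?_
    have hnR : (0:ℝ) < (n:ℝ) := by exact_mod_cast hn
    have hlogle : ((Nat.log 3 n : ℕ) : ℝ) ≤ Real.log n / Real.log 3 := by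
      have h := Real.natLog_le_logb n 3
      simpa [Real.logb] using h
    have hnum : ((4 * Nat.log 3 n + 7 : ℕ) : ℝ) ≤ 4 * (Real.log n / Real.log 3) + 7 := by
      push_cast; linarith
    calc ((4 * Nat.log 3 n + 7 : ℕ) : ℝ) / n
        ≤ (4 * (Real.log n / Real.log 3) + 7) / n := by gcongr
    _ = (4/Real.log 3) * (Real.log n / n) + 7/n := by field_simp
  have habs : Tendsto (fun n:ℕ => |f n - 5/6|) atTop (nhds 0) :=
    squeeze_zero' (Eventually.of_forall (fun n => abs_nonneg _)) hev hg0
  rw [tendsto_iff_dist_tendsto_zero]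
  simpa [Real.dist_eq] using habs
end

section
/- Let Q(x) = x^5 + 2x^3 + 3. Then (1/n) Σ_{i=1}^{n} ν_3(Q(i)) tends to 4/3 as n → ∞. -/
open Filter

def Qn (x : ℕ) : ℕ := x^5 + 2*x^3 + 3
def Dq (x : ℕ) : ℕ := 5*x^4 + 6*x^2

def tval (r k : ℕ) : ℕ := (2 * (Qn r / 3^k) * Dq r) % 3

def Tt (n : ℕ) : ℕ := ∑ i ∈ Finset.Icc 1 n, padicValNat 3 (Qn i)

def Sr (k : ℕ) : Finset ℕ := (Finset.range (3^k)).filter (fun x => 3^k ∣ Qn x)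

lemma taylor_s14 (r h : ℕ) :
    Qn (r + h) = Qn r + h * Dq r + h^2 * (10*r^3 + 6*r + (10*r^2+2)*h + 5*r*h^2 + h^3) := by
  simp only [Qn, Dq]; ring

lemma modeq_Qn {m a b : ℕ} (h : a ≡ b [MOD m]) : Qn a ≡ Qn b [MOD m] := by
  simp only [Qn]
  exact ((h.pow 5).add ((Nat.ModEq.refl 2).mul (h.pow 3))).add (Nat.ModEq.refl 3)

lemma modeq_Dq {m a b : ℕ} (h : a ≡ b [MOD m]) : Dq a ≡ Dq b [MOD m] := by
  simp only [Dq]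
  exact ((Nat.ModEq.refl 5).mul (h.pow 4)).add ((Nat.ModEq.refl 6).mul (h.pow 2))

lemma no3 {k r : ℕ} (hk : 2 ≤ k) (hQ : 3^k ∣ Qn r) : ¬ 3 ∣ r := by
  rintro ⟨t, rfl⟩
  have h1 : Qn (3*t) = 9*(27*t^5+6*t^3) + 3 := by simp only [Qn]; ring
  have h9 : (9:ℕ) ∣ Qn (3*t) := by
    refine dvd_trans ?_ hQ
    have : (3:ℕ)^2 ∣ 3^k := pow_dvd_pow 3 hk
    simpa using this
  omega

lemma dq_unit {r : ℕ} (hr : ¬ 3 ∣ r) : ¬ 3 ∣ Dq r := by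
  have h : Dq r ≡ Dq (r % 3) [MOD 3] := modeq_Dq (Nat.mod_mod_of_dvd r dvd_rfl ▸ (Nat.mod_modEq r 3).symm)
  have hd : (3 ∣ Dq r) ↔ 3 ∣ Dq (r % 3) := h.dvd_iff dvd_rfl
  have hlt : r % 3 < 3 := Nat.mod_lt r (by norm_num)
  have hne : r % 3 ≠ 0 := fun hh => hr (Nat.dvd_of_mod_eq_zero hh)
  interval_cases h : r % 3 <;> simp_all [Dq] <;> omega

lemma lift_iff0 {k r a : ℕ} (hk : 2 ≤ k) (hQ : 3^k ∣ Qn r) (ha : a < 3) :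
    (3^(k+1) ∣ Qn (r + a * 3^k)) ↔ a = (2 * (Qn r / 3^k) * Dq r) % 3 := by
  obtain ⟨c, hc⟩ := hQ
  have hcdiv : Qn r / 3^k = c := by rw [hc]; exact Nat.mul_div_cancel_left c (by positivity)
  have hdq : ¬ 3 ∣ Dq r := dq_unit (no3 hk ⟨c, hc⟩)
  have hexp : Qn (r + a * 3^k) = 3^k * (c + a * Dq r) +
      3^(2*k) * (a^2 * (10*r^3 + 6*r + (10*r^2+2)*(a*3^k) + 5*r*(a*3^k)^2 + (a*3^k)^3)) := by
    rw [taylor_s14, hc]; ring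
  have hdvd2 : 3^(k+1) ∣ 3^(2*k) * (a^2 * (10*r^3 + 6*r + (10*r^2+2)*(a*3^k) + 5*r*(a*3^k)^2 + (a*3^k)^3)) :=
    dvd_mul_of_dvd_left (pow_dvd_pow 3 (by omega)) _
  rw [hexp, ← Nat.dvd_add_iff_left hdvd2]
  have h3k : (3:ℕ)^(k+1) = 3^k * 3 := by ring
  rw [h3k, Nat.mul_dvd_mul_iff_left (show 0 < (3:ℕ)^k by positivity), hcdiv]
  -- now: 3 ∣ c + a * Dq r ↔ a = (2 * c * Dq r) % 3
  have key : ∀ cm ∈ Finset.range 3, ∀ dm ∈ Finset.range 3, ∀ am ∈ Finset.range 3, dm ≠ 0 →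
      ((cm + am * dm) % 3 = 0 ↔ am = (2 * cm * dm) % 3) := by decide
  have h1 : (3 ∣ c + a * Dq r) ↔ (c % 3 + a % 3 * (Dq r % 3)) % 3 = 0 := by
    rw [Nat.dvd_iff_mod_eq_zero, Nat.add_mod, Nat.mul_mod]
    omega
  have h2 : (2 * c * Dq r) % 3 = (2 * (c % 3) * (Dq r % 3)) % 3 := by
    conv_lhs => rw [Nat.mul_mod, Nat.mul_mod 2 c]
    rw [Nat.mul_mod (2 * (c%3)), Nat.mul_mod 2 (c%3)]
    simp [Nat.mod_mod_of_dvd]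
  rw [h1, h2, Nat.mod_eq_of_lt ha]
  have hdm : Dq r % 3 ≠ 0 := fun hh => hdq (Nat.dvd_of_mod_eq_zero hh)
  exact key (c % 3) (Finset.mem_range.2 (Nat.mod_lt _ (by norm_num))) (Dq r % 3)
    (Finset.mem_range.2 (Nat.mod_lt _ (by norm_num))) a (Finset.mem_range.2 ha) hdm

lemma lift_iff {k r a : ℕ} (hk : 2 ≤ k) (hQ : 3^k ∣ Qn r) (ha : a < 3) :
    (3^(k+1) ∣ Qn (r + a * 3^k)) ↔ a = tval r k := lift_iff0 hk hQ ha

lemma mem_Sr {k x : ℕ} : x ∈ Sr k ↔ x < 3^k ∧ 3^k ∣ Qn x := by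
  simp [Sr, Finset.mem_filter, Finset.mem_range]

lemma mod_mem_Sr {k x : ℕ} (h : 3^k ∣ Qn x) : x % 3^k ∈ Sr k := by
  rw [mem_Sr]
  refine ⟨Nat.mod_lt _ (by positivity), ?_⟩
  exact ((modeq_Qn (Nat.mod_modEq x (3^k))).dvd_iff dvd_rfl).mpr h

lemma card_step {k : ℕ} (hk : 2 ≤ k) : (Sr (k+1)).card = (Sr k).card := by
  refine Finset.card_bij' (fun x _ => x % 3^k) (fun r _ => r + tval r k * 3^k) ?_ ?_ ?_ ?_
  · intro x hx
    rw [mem_Sr] at hx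
    exact mod_mem_Sr (dvd_trans (pow_dvd_pow 3 (Nat.le_succ k)) hx.2)
  · intro r hr
    rw [mem_Sr] at hr ⊢
    have ht : tval r k < 3 := Nat.mod_lt _ (by norm_num)
    constructor
    · have : r + tval r k * 3^k < 3^k + 2 * 3^k := by
        have : tval r k * 3^k ≤ 2 * 3^k := Nat.mul_le_mul_right _ (by omega)
        omega
      calc r + tval r k * 3^k < 3^k + 2*3^k := this
        _ = 3^(k+1) := by ring
    · exact (lift_iff hk hr.2 ht).mpr rfl
  · intro x hx
    rw [mem_Sr] at hx
    obtain ⟨hlt, hdvd⟩ := hx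
    set r := x % 3^k with hrdef
    have hxr : r + (x / 3^k) * 3^k = x := Nat.mod_add_div' x (3^k)
    have ha : x / 3^k < 3 := by
      rw [Nat.div_lt_iff_lt_mul (by positivity : 0 < (3:ℕ)^k)]
      calc x < 3^(k+1) := hlt
        _ = 3 * 3^k := by ring
    have hQr : 3^k ∣ Qn r := (mem_Sr.mp (mod_mem_Sr (dvd_trans (pow_dvd_pow 3 (Nat.le_succ k)) hdvd))).2
    have heq : x / 3^k = tval r k := by
      rw [← lift_iff hk hQr ha, hxr]
      exact hdvd
    rw [← heq, hxr]
  · intro r hr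
    rw [mem_Sr] at hr
    simp only [Nat.add_mul_mod_self_right]
    exact Nat.mod_eq_of_lt hr.1

lemma card_Sr_one : (Sr 1).card = 3 := by decide
lemma card_Sr_two : (Sr 2).card = 2 := by decide

lemma card_Sr {k : ℕ} (hk : 2 ≤ k) : (Sr k).card = 2 := by
  induction k, hk using Nat.le_induction with
  | base => exact card_Sr_two
  | succ n hn ih => rw [card_step hn, ih]

def Cc (k m : ℕ) : ℕ := ((Finset.range m).filter (fun i => 3^k ∣ Qn i)).card

def Nn (k n : ℕ) : ℕ := ((Finset.Icc 1 n).filter (fun i => 3^k ∣ Qn i)).card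

lemma block (k j : ℕ) :
    ((Finset.Ico (j*3^k) ((j+1)*3^k)).filter (fun i => 3^k ∣ Qn i)).card = (Sr k).card := by
  refine Finset.card_bij' (fun x _ => x - j*3^k) (fun a _ => a + j*3^k) ?_ ?_ ?_ ?_
  · intro x hx
    simp only [Finset.mem_filter, Finset.mem_Ico] at hx
    obtain ⟨⟨h1, h2⟩, h3⟩ := hx
    simp only [Sr, Finset.mem_filter, Finset.mem_range]
    constructor
    · have : (j+1)*3^k = j*3^k + 3^k := by ring
      omega
    · have hx' : x = (x - j*3^k) + j * 3^k := by omega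
      have hm : (x - j*3^k) ≡ x [MOD 3^k] := by
        show (x - j*3^k) % 3^k = x % 3^k
        conv_rhs => rw [hx']
        rw [Nat.add_mul_mod_self_right]
      exact ((modeq_Qn hm).dvd_iff dvd_rfl).mpr h3
  · intro a ha
    simp only [Sr, Finset.mem_filter, Finset.mem_range] at ha
    simp only [Finset.mem_filter, Finset.mem_Ico]
    refine ⟨⟨Nat.le_add_left _ _, ?_⟩, ?_⟩
    · have : (j+1)*3^k = j*3^k + 3^k := by ring
      omega
    · have hm : (a + j*3^k) ≡ a [MOD 3^k] := by
        unfold Nat.ModEq; simp [Nat.add_mul_mod_self_right]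
      exact ((modeq_Qn hm).dvd_iff dvd_rfl).mpr ha.2
  · intro x hx
    simp only [Finset.mem_filter, Finset.mem_Ico] at hx
    show x - j*3^k + j*3^k = x
    omega
  · intro a _
    show a + j*3^k - j*3^k = a
    omega

lemma Cc_mul (k q : ℕ) : Cc k (q * 3^k) = q * (Sr k).card := by
  induction q with
  | zero => simp [Cc]
  | succ q ih =>
    have hsplit : Finset.range ((q+1) * 3^k) =
        Finset.range (q * 3^k) ∪ Finset.Ico (q*3^k) ((q+1)*3^k) := by
      rw [Finset.range_eq_Ico, Finset.range_eq_Ico]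
      exact (Finset.Ico_union_Ico_eq_Ico (Nat.zero_le _)
        (Nat.mul_le_mul_right _ (Nat.le_succ q))).symm
    have hdisj : Disjoint ((Finset.range (q * 3^k)).filter (fun i => 3^k ∣ Qn i))
        ((Finset.Ico (q*3^k) ((q+1)*3^k)).filter (fun i => 3^k ∣ Qn i)) := by
      apply Finset.disjoint_filter_filter
      rw [Finset.range_eq_Ico]
      exact Finset.Ico_disjoint_Ico_consecutive _ _ _
    unfold Cc
    rw [hsplit, Finset.filter_union, Finset.card_union_of_disjoint hdisj, block]
    have ih' : (Finset.filter (fun i => 3 ^ k ∣ Qn i) (Finset.range (q * 3 ^ k))).card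
        = q * (Sr k).card := ih
    rw [ih']; ring
  
lemma Cc_mono (k : ℕ) {m₁ m₂ : ℕ} (h : m₁ ≤ m₂) : Cc k m₁ ≤ Cc k m₂ :=
  Finset.card_le_card (Finset.filter_subset_filter _ (Finset.range_subset_range.mpr h))

lemma Cc_lower (k m : ℕ) : (Sr k).card * (m / 3^k) ≤ Cc k m := by
  calc (Sr k).card * (m / 3^k) = Cc k ((m / 3^k) * 3^k) := by rw [Cc_mul]; ring
    _ ≤ Cc k m := Cc_mono k (Nat.div_mul_le_self m _)

lemma Cc_upper (k m : ℕ) : Cc k m ≤ (Sr k).card * (m / 3^k + 1) := by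
  calc Cc k m ≤ Cc k ((m / 3^k + 1) * 3^k) := by
        apply Cc_mono
        have h1 := Nat.div_add_mod m (3^k)
        have h2 : m % 3^k < 3^k := Nat.mod_lt _ (by positivity)
        have h3 : (m / 3^k + 1) * 3^k = 3^k * (m / 3^k) + 3^k := by ring
        omega
    _ = (Sr k).card * (m / 3^k + 1) := by rw [Cc_mul]; ring

lemma Nn_le (k n : ℕ) : Nn k n ≤ Cc k (n+1) := by
  apply Finset.card_le_card
  apply Finset.filter_subset_filter
  intro x hx
  simp only [Finset.mem_Icc] at hx
  simp only [Finset.mem_range]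
  omega

lemma Cc_le_Nn (k n : ℕ) : Cc k (n+1) ≤ Nn k n + 1 := by
  have hsub : (Finset.range (n+1)).filter (fun i => 3^k ∣ Qn i) ⊆
      insert 0 ((Finset.Icc 1 n).filter (fun i => 3^k ∣ Qn i)) := by
    intro x hx
    simp only [Finset.mem_filter, Finset.mem_range] at hx
    rcases Nat.eq_zero_or_pos x with h0 | h0
    · simp [h0]
    · exact Finset.mem_insert_of_mem (by simp only [Finset.mem_filter, Finset.mem_Icc]; omega)
  calc Cc k (n+1) ≤ (insert 0 ((Finset.Icc 1 n).filter (fun i => 3^k ∣ Qn i))).card :=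
        Finset.card_le_card hsub
    _ ≤ Nn k n + 1 := Finset.card_insert_le _ _

def Mb (n : ℕ) : ℕ := 5 * Nat.log 3 n + 7

lemma Qn_pos (x : ℕ) : 0 < Qn x := by unfold Qn; positivity

lemma Qn_mono : Monotone Qn := by
  intro a b h
  unfold Qn
  have h5 : a^5 ≤ b^5 := Nat.pow_le_pow_left h 5
  have h3 : a^3 ≤ b^3 := Nat.pow_le_pow_left h 3
  omega

lemma val_le_Mb {i n : ℕ} (hn : 1 ≤ n) (hi : i ≤ n) : padicValNat 3 (Qn i) ≤ Mb n := by
  have h1 : padicValNat 3 (Qn i) ≤ Nat.log 3 (Qn i) := padicValNat_le_nat_log _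
  have h2 : Nat.log 3 (Qn i) ≤ Nat.log 3 (Qn n) := Nat.log_mono_right (Qn_mono hi)
  have h3 : Nat.log 3 (Qn n) < 5 * Nat.log 3 n + 7 := by
    apply Nat.log_lt_of_lt_pow (Qn_pos n).ne' 
    set L := Nat.log 3 n with hL
    have hn3 : n < 3^(L+1) := Nat.lt_pow_succ_log_self (by norm_num) n
    have h5 : n^5 < (3^(L+1))^5 := by
      apply Nat.pow_lt_pow_left hn3 (by norm_num)
    have hq : Qn n ≤ 6 * n^5 := by
      unfold Qn
      have e3 : n^3 ≤ n^5 := Nat.pow_le_pow_right hn (by norm_num)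
      have e1 : 1 ≤ n^5 := Nat.one_le_pow _ _ hn
      omega
    calc Qn n ≤ 6 * n^5 := hq
      _ < 6 * (3^(L+1))^5 := by omega
      _ ≤ 3^(5*L+7) := by
          rw [← pow_mul]
          have : (L+1)*5 = 5*L+5 := by ring
          rw [this]
          have : (3:ℕ)^(5*L+7) = 9 * 3^(5*L+5) := by ring
          omega
  unfold Mb; omega

lemma T_eq (n : ℕ) (hn : 1 ≤ n) : Tt n = ∑ k ∈ Finset.Icc 1 (Mb n), Nn k n := by
  unfold Tt
  have hswap : ∀ i ∈ Finset.Icc 1 n,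
      padicValNat 3 (Qn i) = ∑ k ∈ Finset.Icc 1 (Mb n), (if 3^k ∣ Qn i then 1 else 0) := by
    intro i hi
    simp only [Finset.mem_Icc] at hi
    have hdvd : ∀ k, (3^k ∣ Qn i) ↔ k ≤ padicValNat 3 (Qn i) := fun k =>
      padicValNat_dvd_iff_le (Qn_pos i).ne'
    have hvle : padicValNat 3 (Qn i) ≤ Mb n := val_le_Mb hn hi.2
    calc padicValNat 3 (Qn i)
        = ((Finset.Icc 1 (Mb n)).filter (fun k => 3^k ∣ Qn i)).card := by
          have : (Finset.Icc 1 (Mb n)).filter (fun k => 3^k ∣ Qn i)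
              = Finset.Icc 1 (padicValNat 3 (Qn i)) := by
            ext k
            simp only [Finset.mem_filter, Finset.mem_Icc, hdvd]
            omega
          rw [this, Nat.card_Icc]; omega
      _ = ∑ k ∈ Finset.Icc 1 (Mb n), (if 3^k ∣ Qn i then 1 else 0) := Finset.card_filter _ _
  rw [Finset.sum_congr rfl hswap, Finset.sum_comm]
  apply Finset.sum_congr rfl
  intro k _
  rw [Nn, Finset.card_filter]

lemma cS_le_three {k : ℕ} (hk : 1 ≤ k) : (Sr k).card ≤ 3 := by
  rcases eq_or_lt_of_le hk with h | h
  · rw [← h, card_Sr_one]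
  · rw [card_Sr h]; norm_num

noncomputable def G (M : ℕ) : ℝ := ∑ k ∈ Finset.Icc 1 M, ((Sr k).card : ℝ)/3^k

lemma G_eq {M : ℕ} (hM : 1 ≤ M) : G M = 4/3 - 1/3^M := by
  induction M, hM using Nat.le_induction with
  | base => simp [G, card_Sr_one]; norm_num
  | succ M hM ih =>
    rw [G, Finset.sum_Icc_succ_top (by omega), ← G, ih, card_Sr (by omega)]
    have h3 : (3:ℝ)^(M+1) = 3 * 3^M := by ring
    field_simp
    ring

lemma nat_div_real_lt (a b : ℕ) (hb : 0 < b) : (a : ℝ)/b < (a/b : ℕ) + 1 := by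
  rw [div_lt_iff₀ (by positivity)]
  have h1 := Nat.div_add_mod a b
  have h2 : a % b < b := Nat.mod_lt _ hb
  have : a < (a/b + 1) * b := by
    have h3 : (a/b + 1) * b = b * (a/b) + b := by ring
    omega
  calc (a:ℝ) < ((a/b + 1) * b : ℕ) := by exact_mod_cast this
    _ = ((a/b : ℕ) + 1) * b := by push_cast; ring

lemma Nn_upper_real (k n : ℕ) :
    (Nn k n : ℝ) ≤ ((Sr k).card : ℝ) * ((n+1 : ℝ)/3^k) + (Sr k).card := by
  have h1 : (Nn k n : ℕ) ≤ (Sr k).card * ((n+1) / 3^k + 1) := (Nn_le k n).trans (Cc_upper k (n+1))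
  have h2 : (((n+1) / 3^k : ℕ) : ℝ) ≤ (n+1 : ℝ)/3^k := by
    have := Nat.cast_div_le (α := ℝ) (m := n+1) (n := 3^k)
    push_cast at this ⊢
    convert this using 2 <;> norm_num
  calc (Nn k n : ℝ) ≤ ((Sr k).card : ℝ) * (((n+1) / 3^k : ℕ) + 1) := by exact_mod_cast h1
    _ ≤ ((Sr k).card : ℝ) * ((n+1 : ℝ)/3^k + 1) := by
        apply mul_le_mul_of_nonneg_left _ (by positivity)
        linarith
    _ = ((Sr k).card : ℝ) * ((n+1 : ℝ)/3^k) + (Sr k).card := by ring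

lemma Nn_lower_real (k n : ℕ) :
    ((Sr k).card : ℝ) * ((n+1 : ℝ)/3^k) - (Sr k).card - 1 ≤ (Nn k n : ℝ) := by
  have h1 : (Sr k).card * ((n+1) / 3^k) ≤ Nn k n + 1 := (Cc_lower k (n+1)).trans (Cc_le_Nn k n)
  have h2 : (n+1 : ℝ)/3^k < (((n+1) / 3^k : ℕ) : ℝ) + 1 := by
    have := nat_div_real_lt (n+1) (3^k) (by positivity)
    push_cast at this ⊢
    convert this using 2 <;> norm_num
  have h3 : ((Sr k).card : ℝ) * ((n+1 : ℝ)/3^k) ≤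
      ((Sr k).card : ℝ) * ((((n+1) / 3^k : ℕ) : ℝ) + 1) :=
    mul_le_mul_of_nonneg_left h2.le (by positivity)
  have h4 : ((Sr k).card : ℝ) * ((((n+1) / 3^k : ℕ) : ℝ) + 1)
      = ((Sr k).card : ℝ) * (((n+1) / 3^k : ℕ) : ℝ) + (Sr k).card := by ring
  have h5 : ((Sr k).card : ℝ) * (((n+1) / 3^k : ℕ) : ℝ) ≤ (Nn k n : ℝ) + 1 := by
    exact_mod_cast h1
  linarith

lemma sum_cS_le (M : ℕ) : ∑ k ∈ Finset.Icc 1 M, ((Sr k).card : ℝ) ≤ 3 * M := by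
  calc ∑ k ∈ Finset.Icc 1 M, ((Sr k).card : ℝ) ≤ ∑ k ∈ Finset.Icc 1 M, (3:ℝ) := by
        apply Finset.sum_le_sum
        intro k hk
        simp only [Finset.mem_Icc] at hk
        exact_mod_cast cS_le_three hk.1
    _ = 3 * M := by rw [Finset.sum_const, Nat.card_Icc]; push_cast; ring

lemma sum_main (M n : ℕ) :
    ∑ k ∈ Finset.Icc 1 M, ((Sr k).card : ℝ) * ((n+1 : ℝ)/3^k) = (n+1 : ℝ) * G M := by
  rw [G, Finset.mul_sum]
  apply Finset.sum_congr rfl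
  intro k _
  ring

lemma T_upper {n : ℕ} (hn : 1 ≤ n) : (Tt n : ℝ) ≤ (4/3)*((n:ℝ)+1) + 3 * (Mb n) := by
  have hM : 1 ≤ Mb n := by unfold Mb; omega
  have h0 : (Tt n : ℝ) = ∑ k ∈ Finset.Icc 1 (Mb n), (Nn k n : ℝ) := by
    rw [T_eq n hn]; push_cast; rfl
  rw [h0]
  calc ∑ k ∈ Finset.Icc 1 (Mb n), (Nn k n : ℝ)
      ≤ ∑ k ∈ Finset.Icc 1 (Mb n), (((Sr k).card : ℝ) * ((n+1 : ℝ)/3^k) + (Sr k).card) :=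
        Finset.sum_le_sum (fun k _ => Nn_upper_real k n)
    _ = (n+1 : ℝ) * G (Mb n) + ∑ k ∈ Finset.Icc 1 (Mb n), ((Sr k).card : ℝ) := by
        rw [Finset.sum_add_distrib, sum_main]
    _ ≤ (4/3)*((n:ℝ)+1) + 3 * (Mb n) := by
        have h1 := sum_cS_le (Mb n)
        have h2 : G (Mb n) ≤ 4/3 := by
          rw [G_eq hM]
          have : (0:ℝ) < 1/3^(Mb n) := by positivity
          linarith
        have h3 : (0:ℝ) ≤ (n:ℝ) + 1 := by positivity
        nlinarith

lemma np1_le_pow {n : ℕ} (hn : 1 ≤ n) : ((n:ℝ) + 1) ≤ 3^(Mb n) := by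
  have h1 : n < 3^(Nat.log 3 n + 1) := Nat.lt_pow_succ_log_self (by norm_num) n
  have h2 : (3:ℕ)^(Nat.log 3 n + 1) ≤ 3^(Mb n) := Nat.pow_le_pow_right (by norm_num) (by unfold Mb; omega)
  have : n + 1 ≤ 3^(Mb n) := by omega
  exact_mod_cast this

lemma T_lower {n : ℕ} (hn : 1 ≤ n) : (4/3)*((n:ℝ)+1) - 1 - 4 * (Mb n) ≤ (Tt n : ℝ) := by
  have hM : 1 ≤ Mb n := by unfold Mb; omega
  have h0 : (Tt n : ℝ) = ∑ k ∈ Finset.Icc 1 (Mb n), (Nn k n : ℝ) := by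
    rw [T_eq n hn]; push_cast; rfl
  rw [h0]
  have step1 : ∑ k ∈ Finset.Icc 1 (Mb n), (((Sr k).card : ℝ) * ((n+1 : ℝ)/3^k) - (Sr k).card - 1)
      ≤ ∑ k ∈ Finset.Icc 1 (Mb n), (Nn k n : ℝ) :=
    Finset.sum_le_sum (fun k _ => Nn_lower_real k n)
  have step2 : ∑ k ∈ Finset.Icc 1 (Mb n), (((Sr k).card : ℝ) * ((n+1 : ℝ)/3^k) - (Sr k).card - 1)
      = (n+1 : ℝ) * G (Mb n) - (∑ k ∈ Finset.Icc 1 (Mb n), ((Sr k).card : ℝ)) - (Mb n) := by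
    rw [Finset.sum_sub_distrib, Finset.sum_sub_distrib, sum_main, Finset.sum_const, Nat.card_Icc]
    push_cast; ring
  have h1 := sum_cS_le (Mb n)
  have h2 : (n+1 : ℝ) * G (Mb n) = (4/3)*((n:ℝ)+1) - ((n:ℝ)+1)/3^(Mb n) := by
    rw [G_eq hM]; push_cast; field_simp
  have h3 : ((n:ℝ)+1)/3^(Mb n) ≤ 1 := by
    rw [div_le_one (by positivity)]
    exact np1_le_pow hn
  linarith

lemma log_bound {n : ℕ} (hn : 1 ≤ n) : (Nat.log 3 n : ℝ) ≤ Real.log n / Real.log 2 := by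
  have h2 : (2:ℕ)^(Nat.log 3 n) ≤ n := by
    calc (2:ℕ)^(Nat.log 3 n) ≤ 3^(Nat.log 3 n) := Nat.pow_le_pow_left (by norm_num) _
      _ ≤ n := Nat.pow_log_le_self 3 (by omega)
  have h2r : (2:ℝ)^(Nat.log 3 n) ≤ (n:ℝ) := by exact_mod_cast h2
  have hlog : (Nat.log 3 n : ℝ) * Real.log 2 ≤ Real.log n := by
    calc (Nat.log 3 n : ℝ) * Real.log 2 = Real.log ((2:ℝ)^(Nat.log 3 n)) := by
          rw [Real.log_pow]
      _ ≤ Real.log n := Real.log_le_log (by positivity) h2r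
  have hl2 : (0:ℝ) < Real.log 2 := Real.log_pos (by norm_num)
  rw [le_div_iff₀ hl2]
  exact hlog

theorem main_tendsto : Tendsto (fun n : ℕ => (Tt n : ℝ) / n) atTop (nhds (4/3)) := by
  rw [tendsto_iff_dist_tendsto_zero]
  have hb : Tendsto (fun n : ℕ => (20/Real.log 2) * (Real.log n / n) + 33/n) atTop (nhds 0) := by
    have h1 : Tendsto (fun n : ℕ => Real.log n / n) atTop (nhds 0) :=
      (Real.isLittleO_log_id_atTop.tendsto_div_nhds_zero).comp tendsto_natCast_atTop_atTop
    have h2 : Tendsto (fun n : ℕ => (33:ℝ)/n) atTop (nhds 0) :=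
      tendsto_const_div_atTop_nhds_zero_nat 33
    have := (h1.const_mul (20/Real.log 2)).add h2
    simpa using this
  apply squeeze_zero' (Eventually.of_forall (fun n => dist_nonneg)) _ hb
  filter_upwards [eventually_ge_atTop 1] with n hn
  have hnR : (1:ℝ) ≤ (n:ℝ) := by exact_mod_cast hn
  have hnpos : (0:ℝ) < n := by linarith
  have hu := T_upper hn
  have hl := T_lower hn
  have hM : (Mb n : ℝ) = 5 * (Nat.log 3 n : ℝ) + 7 := by unfold Mb; push_cast; ring
  have hMnn : (0:ℝ) ≤ (Mb n : ℝ) := Nat.cast_nonneg _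
  have key1 : (4:ℝ)/3 * n - (Tt n) ≤ 4*(Mb n : ℝ)+5 := by linarith
  have key2 : (Tt n : ℝ) - 4/3*n ≤ 4*(Mb n : ℝ)+5 := by linarith
  have habs : |((Tt n : ℝ)/n) - 4/3| ≤ (4 * (Mb n : ℝ) + 5)/n := by
    have e1 : ((Tt n : ℝ)/n) - 4/3 = ((Tt n : ℝ) - 4/3*n)/n := by field_simp
    rw [e1, abs_div, abs_of_pos hnpos, div_le_div_iff_of_pos_right hnpos, abs_le]
    constructor <;> linarith
  rw [Real.dist_eq]
  refine habs.trans ?_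
  have hl2 : (0:ℝ) < Real.log 2 := Real.log_pos (by norm_num)
  have hlog' : (Nat.log 3 n : ℝ) * Real.log 2 ≤ Real.log n := (le_div_iff₀ hl2).mp (log_bound hn)
  have e : 20/Real.log 2 * (Real.log ↑n / ↑n) + 33/↑n = (20/Real.log 2 * Real.log ↑n + 33)/↑n := by
    ring
  rw [e, hM]
  have h20 : 20 * (Nat.log 3 n:ℝ) ≤ 20/Real.log 2 * Real.log n := by
    rw [div_mul_eq_mul_div, le_div_iff₀ hl2]
    linarith
  rw [div_le_div_iff_of_pos_right hnpos]
  linarith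

theorem val3_Q_asymptotic :
    Tendsto (fun n : ℕ =>
        (∑ i ∈ Finset.Icc 1 n, (padicValInt 3 ((i : ℤ) ^ 5 + 2 * i ^ 3 + 3) : ℝ)) / n)
      atTop (nhds (4 / 3)) := by
  have hcong : ∀ n : ℕ,
      (∑ i ∈ Finset.Icc 1 n, (padicValInt 3 ((i : ℤ) ^ 5 + 2 * i ^ 3 + 3) : ℝ)) = (Tt n : ℝ) := by
    intro n
    rw [Tt]
    push_cast
    apply Finset.sum_congr rfl
    intro i _
    have h : ((i:ℤ) ^ 5 + 2 * i ^ 3 + 3) = ((Qn i : ℕ) : ℤ) := by push_cast [Qn]; ring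
    rw [h, padicValInt.of_nat]
  apply main_tendsto.congr
  intro n
  rw [hcong]
end

section
/- Let Q(x) = x^5 + 2x^3 + 3. Then (1/n) Σ_{i=1}^{n} ν_29(Q(i)) tends to 57/812 as n → ∞. -/
open Filter

instance fact29 : Fact (Nat.Prime 29) := ⟨by norm_num⟩

lemma H_pos (i : ℕ) : (0:ℤ) < (i:ℤ)^4 - i^3 + 3*i^2 - 3*i + 3 := by
  rcases Nat.eq_zero_or_pos i with h | h
  · subst h; norm_num
  · have hi : (1:ℤ) ≤ (i:ℤ) := by exact_mod_cast h
    nlinarith [sq_nonneg ((i:ℤ)-1), sq_nonneg ((i:ℤ)^2-1)]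

lemma val_H (i : ℕ) :
    padicValInt 29 ((i:ℤ)^4 - i^3 + 3*i^2 - 3*i + 3) = if i % 29 = 14 then 1 else 0 := by
  have hne : ((i:ℤ)^4 - i^3 + 3*i^2 - 3*i + 3) ≠ 0 := (H_pos i).ne'
  split_ifs with h
  · -- i ≡ 14 mod 29
    obtain ⟨q, rfl⟩ : ∃ q, i = 29*q + 14 := ⟨i/29, by omega⟩
    have key : ((29*q+14:ℕ):ℤ)^4 - ((29*q+14:ℕ):ℤ)^3 + 3*((29*q+14:ℕ):ℤ)^2
        - 3*((29*q+14:ℕ):ℤ) + 3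
        = 841 * (841*(q:ℤ)^4 + 1595*q^3 + 1137*q^2 + 361*q + 43) + 58 := by
      push_cast; ring
    set P : ℤ := 841*(q:ℤ)^4 + 1595*q^3 + 1137*q^2 + 361*q + 43 with hP
    have hdvd : ((29:ℕ):ℤ)^1 ∣ ((29*q+14:ℕ):ℤ)^4 - ((29*q+14:ℕ):ℤ)^3
        + 3*((29*q+14:ℕ):ℤ)^2 - 3*((29*q+14:ℕ):ℤ) + 3 := by
      rw [key]; exact ⟨29*P+2, by push_cast; ring⟩
    have hndvd : ¬ ((29:ℕ):ℤ)^2 ∣ ((29*q+14:ℕ):ℤ)^4 - ((29*q+14:ℕ):ℤ)^3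
        + 3*((29*q+14:ℕ):ℤ)^2 - 3*((29*q+14:ℕ):ℤ) + 3 := by
      rw [key]
      intro hd
      have h841 : ((29:ℕ):ℤ)^2 = 841 := by norm_num
      rw [h841] at hd
      have : (841:ℤ) ∣ 58 := (dvd_add_right (dvd_mul_right 841 P)).mp hd
      norm_num at this
    have h1 : 1 ≤ padicValInt 29 (((29*q+14:ℕ):ℤ)^4 - ((29*q+14:ℕ):ℤ)^3
        + 3*((29*q+14:ℕ):ℤ)^2 - 3*((29*q+14:ℕ):ℤ) + 3) := by
      rcases (padicValInt_dvd_iff 1 _).mp hdvd with h | h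
      · exact absurd h hne
      · exact h
    have h2 : ¬ 2 ≤ padicValInt 29 (((29*q+14:ℕ):ℤ)^4 - ((29*q+14:ℕ):ℤ)^3
        + 3*((29*q+14:ℕ):ℤ)^2 - 3*((29*q+14:ℕ):ℤ) + 3) := fun hle =>
      hndvd ((padicValInt_dvd_iff 2 _).mpr (Or.inr hle))
    push_cast at h1 h2 ⊢
    omega
  · -- not divisible
    apply padicValInt.eq_zero_of_not_dvd
    intro hd
    have hz : (((i:ℤ)^4 - i^3 + 3*i^2 - 3*i + 3 : ℤ) : ZMod 29) = 0 :=
      (ZMod.intCast_zmod_eq_zero_iff_dvd _ 29).mpr (by exact_mod_cast hd)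
    push_cast at hz
    have key : ∀ r : ZMod 29, r^4 - r^3 + 3*r^2 - 3*r + 3 = 0 → r = 14 := by decide
    have h14 : (i : ZMod 29) = 14 := key _ hz
    have := congrArg ZMod.val h14
    rw [ZMod.val_natCast] at this
    have h14v : (14 : ZMod 29).val = 14 := by decide
    omega

lemma val_Q (i : ℕ) :
    padicValInt 29 ((i:ℤ)^5 + 2*i^3 + 3)
      = padicValNat 29 (i+1) + (if i % 29 = 14 then 1 else 0) := by
  have hfact : ((i:ℤ)^5 + 2*i^3 + 3) = ((i:ℤ)+1) * ((i:ℤ)^4 - i^3 + 3*i^2 - 3*i + 3) := by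
    ring
  rw [hfact, padicValInt.mul (by positivity) (H_pos i).ne', val_H]
  congr 1

lemma sum_ind (n : ℕ) :
    (∑ i ∈ Finset.Icc 1 n, (if i % 29 = 14 then 1 else 0)) = (n+15)/29 := by
  induction n with
  | zero => simp
  | succ n ih =>
    rw [Finset.sum_Icc_succ_top (by omega), ih]
    split_ifs with h <;> omega

lemma sum_val (n : ℕ) :
    (∑ i ∈ Finset.Icc 1 n, padicValNat 29 (i+1)) = padicValNat 29 (Nat.factorial (n+1)) := by
  induction n with
  | zero => simp
  | succ n ih =>
    rw [Finset.sum_Icc_succ_top (by omega), ih, show Nat.factorial (n+1+1)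
        = (n+1+1) * Nat.factorial (n+1) from rfl,
      padicValNat.mul (by omega) (Nat.factorial_ne_zero _)]
    omega

lemma sum_total (n : ℕ) :
    (∑ i ∈ Finset.Icc 1 n, padicValInt 29 ((i:ℤ)^5 + 2*i^3 + 3))
      = padicValNat 29 (Nat.factorial (n+1)) + (n+15)/29 := by
  rw [Finset.sum_congr rfl (fun i _ => val_Q i), Finset.sum_add_distrib, sum_ind, sum_val]

lemma base_lim (a c : ℝ) : Tendsto (fun n : ℕ => (a*(n:ℝ)+c)/n) atTop (nhds a) := by
  have h := (tendsto_const_div_atTop_nhds_zero_nat c).const_add a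
  rw [add_zero] at h
  apply h.congr'
  filter_upwards [eventually_ne_atTop 0] with n hn
  have : (n:ℝ) ≠ 0 := Nat.cast_ne_zero.mpr hn
  field_simp

-- limit of Nat.log / n
lemma log_lim : Tendsto (fun n : ℕ => ((Nat.log 29 (n+1) : ℕ) : ℝ)/n) atTop (nhds 0) := by
  have hlog : Tendsto (fun n : ℕ => Real.log ((n:ℝ)+1) / ((n:ℝ)+1)) atTop (nhds 0) := by
    have : Tendsto (fun n : ℕ => ((n:ℝ)+1)) atTop atTop :=
      tendsto_atTop_add_const_right _ 1 tendsto_natCast_atTop_atTop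
    exact (Real.isLittleO_log_id_atTop.tendsto_div_nhds_zero).comp this
  have hprod : Tendsto (fun n : ℕ => (Real.log ((n:ℝ)+1) / ((n:ℝ)+1)) * (((n:ℝ)+1)/n))
      atTop (nhds 0) := by
    have h2 : Tendsto (fun n : ℕ => ((n:ℝ)+1)/n) atTop (nhds 1) := by
      have := base_lim 1 1; simpa using this
    simpa using hlog.mul h2
  have hlogb : Tendsto (fun n : ℕ => Real.log ((n:ℝ)+1) / n) atTop (nhds 0) := by
    apply hprod.congr'
    filter_upwards [eventually_ne_atTop 0] with n hn
    have h1 : (n:ℝ) ≠ 0 := Nat.cast_ne_zero.mpr hn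
    have h2 : (n:ℝ)+1 ≠ 0 := by positivity
    field_simp
  -- squeeze
  have hub : Tendsto (fun n : ℕ => (Real.log ((n:ℝ)+1) / Real.log 29) / n) atTop (nhds 0) := by
    have := hlogb.const_mul (1/Real.log 29)
    rw [mul_zero] at this
    apply this.congr
    intro n; ring
  apply tendsto_of_tendsto_of_tendsto_of_le_of_le' tendsto_const_nhds hub
  · filter_upwards with n
    positivity
  · filter_upwards [eventually_ge_atTop 1] with n hn
    have hb : (Nat.log 29 (n+1) : ℝ) ≤ Real.logb 29 ((n+1:ℕ):ℝ) := Real.natLog_le_logb (n+1) 29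
    rw [Real.logb] at hb
    push_cast at hb
    have hn' : (0:ℝ) < n := by exact_mod_cast hn
    exact div_le_div_of_nonneg_right hb hn'.le

lemma digit_sum_bound (n : ℕ) :
    ((Nat.digits 29 (n+1)).sum : ℕ) ≤ 28 * (Nat.log 29 (n+1) + 1) := by
  have hlen : (Nat.digits 29 (n+1)).length = Nat.log 29 (n+1) + 1 :=
    Nat.digits_len 29 (n+1) (by norm_num) (by omega)
  have hbd : ∀ d ∈ Nat.digits 29 (n+1), d ≤ 28 := fun d hd =>
    Nat.lt_succ_iff.mp (Nat.digits_lt_base (by norm_num) hd)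
  calc (Nat.digits 29 (n+1)).sum ≤ (Nat.digits 29 (n+1)).length • 28 :=
        List.sum_le_card_nsmul _ 28 hbd
    _ = 28 * (Nat.log 29 (n+1) + 1) := by rw [hlen, smul_eq_mul, mul_comm]

lemma fact_lim :
    Tendsto (fun n : ℕ => ((padicValNat 29 (Nat.factorial (n+1)) : ℕ):ℝ)/n)
      atTop (nhds (1/28)) := by
  have key : ∀ n : ℕ, ((padicValNat 29 (Nat.factorial (n+1)) : ℕ):ℝ)
      = (((n:ℝ)+1) - ((Nat.digits 29 (n+1)).sum : ℝ))/28 := by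
    intro n
    have h := sub_one_mul_padicValNat_factorial (p := 29) (n+1)
    have hle : (Nat.digits 29 (n+1)).sum ≤ n+1 := Nat.digit_sum_le 29 (n+1)
    have h' : (28:ℝ) * (padicValNat 29 (Nat.factorial (n+1)) : ℝ)
        = ((n:ℝ)+1) - ((Nat.digits 29 (n+1)).sum : ℝ) := by
      have := congrArg (Nat.cast : ℕ → ℝ) h
      rw [Nat.cast_mul, Nat.cast_sub hle] at this
      push_cast at this ⊢
      linarith
    linarith
  have hs : Tendsto (fun n : ℕ => ((Nat.digits 29 (n+1)).sum : ℝ)/n) atTop (nhds 0) := by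
    apply tendsto_of_tendsto_of_tendsto_of_le_of_le' tendsto_const_nhds
      (f := fun n : ℕ => ((Nat.digits 29 (n+1)).sum : ℝ)/n)
      (h := fun n : ℕ => 28 * (((Nat.log 29 (n+1):ℕ):ℝ)/n) + 28/n)
    · have h1 := log_lim.const_mul (28:ℝ)
      have h2 := tendsto_const_div_atTop_nhds_zero_nat (28:ℝ)
      have := h1.add h2
      simpa using this
    · filter_upwards with n; positivity
    · filter_upwards [eventually_ge_atTop 1] with n hn
      have hn' : (0:ℝ) < n := by exact_mod_cast hn
      have hb := digit_sum_bound n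
      have hb' : ((Nat.digits 29 (n+1)).sum : ℝ) ≤ 28 * ((Nat.log 29 (n+1):ℕ):ℝ) + 28 := by
        exact_mod_cast hb.trans_eq (by ring)
      calc ((Nat.digits 29 (n+1)).sum : ℝ)/n
          ≤ (28 * ((Nat.log 29 (n+1):ℕ):ℝ) + 28)/n :=
            div_le_div_of_nonneg_right hb' hn'.le
        _ = 28 * (((Nat.log 29 (n+1):ℕ):ℝ)/n) + 28/n := by field_simp
  have h1 : Tendsto (fun n : ℕ => (((n:ℝ)+1))/(28*n)) atTop (nhds (1/28)) := by
    have := base_lim (1/28) (1/28)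
    apply this.congr'
    filter_upwards [eventually_ne_atTop 0] with n hn
    have : (n:ℝ) ≠ 0 := Nat.cast_ne_zero.mpr hn
    field_simp
  have h2 := hs.const_mul (1/28 : ℝ)
  rw [mul_zero] at h2
  have := h1.sub h2
  rw [sub_zero] at this
  apply this.congr'
  filter_upwards [eventually_ne_atTop 0] with n hn
  have hn0 : (n:ℝ) ≠ 0 := Nat.cast_ne_zero.mpr hn
  rw [key n]
  field_simp

lemma ind_lim :
    Tendsto (fun n : ℕ => (((n+15)/29 : ℕ):ℝ)/n) atTop (nhds (1/29)) := by
  apply tendsto_of_tendsto_of_tendsto_of_le_of_le'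
    (g := fun n : ℕ => (((n:ℝ)-13)/29)/n) (h := fun n : ℕ => (((n:ℝ)+15)/29)/n)
  · have := base_lim ((1:ℝ)/29) (-13/29)
    apply this.congr
    intro n; ring_nf
  · have := base_lim ((1:ℝ)/29) (15/29)
    apply this.congr
    intro n; ring_nf
  · filter_upwards [eventually_ge_atTop 13] with n hn
    have hn' : (0:ℝ) < n := by exact_mod_cast Nat.lt_of_lt_of_le (by norm_num) hn
    have h1 : n - 13 ≤ 29 * ((n+15)/29) := by omega
    have h2 : ((n:ℝ)-13)/29 ≤ (((n+15)/29 : ℕ):ℝ) := by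
      rw [div_le_iff₀ (by norm_num : (0:ℝ) < 29)]
      have hc : ((n - 13 : ℕ) : ℝ) ≤ ((29 * ((n+15)/29) : ℕ) : ℝ) := by exact_mod_cast h1
      rw [Nat.cast_sub (by omega : 13 ≤ n)] at hc
      push_cast at hc
      linarith
    exact div_le_div_of_nonneg_right h2 hn'.le
  · filter_upwards [eventually_ge_atTop 1] with n hn
    have hn' : (0:ℝ) < n := by exact_mod_cast hn
    have h1 : 29 * ((n+15)/29) ≤ n + 15 := by omega
    have h2 : (((n+15)/29 : ℕ):ℝ) ≤ ((n:ℝ)+15)/29 := by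
      rw [le_div_iff₀ (by norm_num : (0:ℝ) < 29)]
      have : ((29 * ((n+15)/29) : ℕ) : ℝ) ≤ ((n + 15 : ℕ) : ℝ) := by exact_mod_cast h1
      push_cast at this
      linarith
    exact div_le_div_of_nonneg_right h2 hn'.le


theorem val29_Q_asymptotic :
    Tendsto (fun n : ℕ =>
        (∑ i ∈ Finset.Icc 1 n, (padicValInt 29 ((i : ℤ) ^ 5 + 2 * i ^ 3 + 3) : ℝ)) / n)
      atTop (nhds (57 / 812)) := by
  have heq : ∀ n : ℕ,
      (∑ i ∈ Finset.Icc 1 n, (padicValInt 29 ((i : ℤ) ^ 5 + 2 * i ^ 3 + 3) : ℝ)) / n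
      = ((padicValNat 29 (Nat.factorial (n+1)) : ℕ):ℝ) / n + (((n+15)/29 : ℕ):ℝ)/n := by
    intro n
    rw [← Nat.cast_sum, sum_total n]
    push_cast
    ring
  rw [show (57/812 : ℝ) = 1/28 + 1/29 by norm_num]
  exact (fact_lim.add ind_lim).congr fun n => (heq n).symm
end

section
/- Let p be an odd prime. Then (1/n) Σ_{i=1}^{n} ν_p(i^p + 1) tends to (2p-1)/(p(p-1)) as n → ∞. -/
open Filter

private lemma valp_term_eq (p : ℕ) (hp : p.Prime) (hodd : Odd p) (i : ℕ) :
    padicValInt p ((i : ℤ) ^ p + 1) =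
      padicValNat p (i + 1) + (if p ∣ i + 1 then 1 else 0) := by
  haveI : Fact p.Prime := ⟨hp⟩
  have hcast : ((i : ℤ) ^ p + 1) = ((i ^ p + 1 : ℕ) : ℤ) := by push_cast; ring
  rw [hcast, padicValInt.of_nat]
  by_cases h : p ∣ i + 1
  · have hx : ¬ p ∣ i := by
      intro hx
      have h1 : p ∣ 1 := by simpa using Nat.dvd_sub h hx
      have := hp.two_le
      exact absurd (Nat.le_of_dvd one_pos h1) (by omega)
    have key := padicValNat.pow_add_pow (x := i) (y := 1) (p := p) hodd
      (by simpa using h) hx hodd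
    simpa [padicValNat.self hp.one_lt, h] using key
  · have h2 : ¬ p ∣ i ^ p + 1 := by
      intro hd
      apply h
      haveI : NeZero p := ⟨hp.ne_zero⟩
      have h0 : ((i ^ p + 1 : ℕ) : ZMod p) = 0 :=
        (ZMod.natCast_eq_zero_iff _ _).mpr hd
      have h1 : ((i + 1 : ℕ) : ZMod p) = 0 := by
        push_cast at h0 ⊢
        rw [ZMod.pow_card] at h0
        exact h0
      exact (ZMod.natCast_eq_zero_iff _ _).mp h1
    rw [padicValNat.eq_zero_of_not_dvd h2, padicValNat.eq_zero_of_not_dvd h, if_neg h]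

private lemma valp_sum_eq (p : ℕ) (hp : p.Prime) (hodd : Odd p) (n : ℕ) :
    ∑ i ∈ Finset.Icc 1 n, padicValInt p ((i : ℤ) ^ p + 1)
      = padicValNat p (Nat.factorial (n + 1)) + (n + 1) / p := by
  haveI : Fact p.Prime := ⟨hp⟩
  induction n with
  | zero => simp [Nat.div_eq_of_lt hp.one_lt]
  | succ n ih =>
      rw [Finset.sum_Icc_succ_top (by omega), ih, valp_term_eq p hp hodd]
      have hfac : padicValNat p (Nat.factorial (n + 2)) = padicValNat p (n + 2) + padicValNat p (Nat.factorial (n + 1)) := by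
        rw [show Nat.factorial (n + 2) = (n + 2) * Nat.factorial (n + 1) from Nat.factorial_succ (n+1)]
        exact padicValNat.mul (by omega) (Nat.factorial_ne_zero _)
      have hdiv : (n + 2) / p = (n + 1) / p + if p ∣ n + 2 then 1 else 0 :=
        Nat.succ_div (a := n+1) (b := p)
      rw [show n + 1 + 1 = n + 2 from rfl, hfac, hdiv]
      ring

private lemma log_div_tendsto : Tendsto (fun n : ℕ => Real.log ((n : ℝ) + 1) / n) atTop (nhds 0) := by
  have h1 : Tendsto (fun x : ℝ => Real.log x / x) atTop (nhds 0) :=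
    Real.isLittleO_log_id_atTop.tendsto_div_nhds_zero
  have h2 : Tendsto (fun n : ℕ => (n : ℝ) + 1) atTop atTop :=
    tendsto_atTop_add_const_right _ 1 tendsto_natCast_atTop_atTop
  have h3 : Tendsto (fun n : ℕ => Real.log ((n : ℝ) + 1) / ((n : ℝ) + 1)) atTop (nhds 0) :=
    h1.comp h2
  have h4 : Tendsto (fun n : ℕ => ((n : ℝ) + 1) / n) atTop (nhds 1) := by
    have := tendsto_one_div_atTop_nhds_zero_nat (𝕜 := ℝ)
    have h := this.const_add 1
    simp only [add_zero] at h
    refine h.congr' ?_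
    filter_upwards [eventually_ge_atTop 1] with n hn
    have : (n : ℝ) ≠ 0 := by positivity
    field_simp
  have := h3.mul h4
  rw [zero_mul] at this
  refine this.congr' ?_
  filter_upwards [eventually_ge_atTop 1] with n hn
  have hn0 : (n : ℝ) ≠ 0 := by
    have : 0 < n := hn
    positivity
  have hn1 : (n : ℝ) + 1 ≠ 0 := by positivity
  field_simp


private lemma aux_tendsto (a b : ℝ) (hb : b ≠ 0) :
    Tendsto (fun n : ℕ => ((n : ℝ) + a) / (b * n)) atTop (nhds (1 / b)) := by
  have h := (tendsto_one_div_atTop_nhds_zero_nat.const_mul (a / b)).const_add (1 / b)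
  rw [mul_zero, add_zero] at h
  refine h.congr' ?_
  filter_upwards [eventually_ge_atTop 1] with n hn
  have hn0 : (n : ℝ) ≠ 0 := by
    have : 0 < n := hn
    positivity
  field_simp

theorem valp_pow_p_add_one_asymptotic (p : ℕ) (hp : p.Prime) (hodd : Odd p) :
    Tendsto (fun n : ℕ =>
        (∑ i ∈ Finset.Icc 1 n, (padicValInt p ((i : ℤ) ^ p + 1) : ℝ)) / n)
      atTop (nhds ((2 * (p : ℝ) - 1) / ((p : ℝ) * ((p : ℝ) - 1)))) := by
  haveI : Fact p.Prime := ⟨hp⟩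
  have hp1 : (1 : ℝ) < p := by exact_mod_cast hp.one_lt
  have hp0 : (0 : ℝ) < p := by linarith
  have hpm1 : (0 : ℝ) < (p : ℝ) - 1 := by linarith
  -- Part A : padicValNat p ((n+1)!) / n → 1/(p-1)
  have hA : Tendsto (fun n : ℕ => (padicValNat p (Nat.factorial (n + 1)) : ℝ) / n) atTop
      (nhds (1 / ((p : ℝ) - 1))) := by
    have hup : Tendsto (fun n : ℕ => ((n : ℝ) + 1) / (((p : ℝ) - 1) * n)) atTop
        (nhds (1 / ((p : ℝ) - 1))) := aux_tendsto 1 _ hpm1.ne'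
    have hlogt : Tendsto (fun n : ℕ => (Real.logb p ((n : ℝ) + 1) + 1) / n) atTop (nhds 0) := by
      have h1 := log_div_tendsto.const_mul (1 / Real.log p)
      rw [mul_zero] at h1
      have h2 := h1.add tendsto_one_div_atTop_nhds_zero_nat
      rw [add_zero] at h2
      refine h2.congr' ?_
      filter_upwards [eventually_ge_atTop 1] with n hn
      have hn0 : (n : ℝ) ≠ 0 := by
        have : 0 < n := hn
        positivity
      rw [Real.logb]
      ring
    have hlow : Tendsto (fun n : ℕ =>
        ((n : ℝ) + 1) / (((p : ℝ) - 1) * n) - (Real.logb p ((n : ℝ) + 1) + 1) / n) atTop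
        (nhds (1 / ((p : ℝ) - 1))) := by
      have := hup.sub hlogt
      rwa [sub_zero] at this
    refine tendsto_of_tendsto_of_tendsto_of_le_of_le' hlow hup ?_ ?_
    · filter_upwards [eventually_ge_atTop 1] with n hn
      set q := padicValNat p (Nat.factorial (n + 1)) with hq
      set s := (p.digits (n + 1)).sum with hs
      have hn0 : (0 : ℝ) < n := by exact_mod_cast hn
      have hsle : s ≤ n + 1 := Nat.digit_sum_le p (n + 1)
      have hleg : (p - 1) * q = (n + 1) - s := sub_one_mul_padicValNat_factorial (n + 1)
      have hq_eq : ((p : ℝ) - 1) * q = ((n : ℝ) + 1) - s := by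
        have := congrArg (Nat.cast : ℕ → ℝ) hleg
        push_cast [Nat.cast_sub hsle, Nat.cast_sub hp.one_le] at this
        linarith [this]
      have hs_le : (s : ℝ) ≤ ((p : ℝ) - 1) * (Real.logb p ((n : ℝ) + 1) + 1) := by
        have hlen : (p.digits (n + 1)).length = Nat.log p (n + 1) + 1 :=
          Nat.digits_len p (n + 1) hp.one_lt (by omega)
        have hdig : ∀ d ∈ p.digits (n + 1), d ≤ p - 1 := fun d hd =>
          Nat.le_sub_one_of_lt (Nat.digits_lt_base hp.one_lt hd)
        have hnat : s ≤ (Nat.log p (n + 1) + 1) * (p - 1) := by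
          have := List.sum_le_card_nsmul _ _ hdig
          rwa [smul_eq_mul, hlen] at this
        have h1 : (s : ℝ) ≤ ((Nat.log p (n + 1) : ℝ) + 1) * ((p : ℝ) - 1) := by
          have := (Nat.cast_le (α := ℝ)).mpr hnat
          push_cast [Nat.cast_sub hp.one_le] at this
          linarith [this]
        have h2 : (Nat.log p (n + 1) : ℝ) ≤ Real.logb p ((n : ℝ) + 1) := by
          have := Real.natLog_le_logb (n + 1) p
          push_cast at this
          exact this
        nlinarith [h1, h2]
      have hnn : (0 : ℝ) ≤ (n : ℝ) * n := by positivity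
      rw [div_sub_div _ _ (by positivity : ((p : ℝ) - 1) * n ≠ 0) hn0.ne',
        div_le_div_iff₀ (by positivity) hn0]
      have hq_eq_n : ((p : ℝ) - 1) * q * ((n : ℝ) * n) = (((n : ℝ) + 1) - s) * ((n : ℝ) * n) := by
        rw [hq_eq]
      nlinarith [mul_le_mul_of_nonneg_right hs_le hnn, hq_eq_n]
    · filter_upwards [eventually_ge_atTop 1] with n hn
      set q := padicValNat p (Nat.factorial (n + 1)) with hq
      set s := (p.digits (n + 1)).sum with hs
      have hn0 : (0 : ℝ) < n := by exact_mod_cast hn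
      have hsle : s ≤ n + 1 := Nat.digit_sum_le p (n + 1)
      have hleg : (p - 1) * q = (n + 1) - s := sub_one_mul_padicValNat_factorial (n + 1)
      have hq_eq : ((p : ℝ) - 1) * q = ((n : ℝ) + 1) - s := by
        have := congrArg (Nat.cast : ℕ → ℝ) hleg
        push_cast [Nat.cast_sub hsle, Nat.cast_sub hp.one_le] at this
        linarith [this]
      have hs0 : (0 : ℝ) ≤ s := Nat.cast_nonneg s
      rw [div_le_div_iff₀ hn0 (by positivity)]
      nlinarith [mul_le_mul_of_nonneg_right (show ((p:ℝ)-1) * q ≤ (n:ℝ)+1 by linarith) hn0.le]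
  -- Part B : ((n+1)/p : ℕ) / n → 1/p
  have hB : Tendsto (fun n : ℕ => (((n + 1) / p : ℕ) : ℝ) / n) atTop (nhds (1 / (p : ℝ))) := by
    have hup : Tendsto (fun n : ℕ => ((n : ℝ) + 1) / ((p : ℝ) * n)) atTop
        (nhds (1 / (p : ℝ))) := aux_tendsto 1 _ hp0.ne'
    have hlow : Tendsto (fun n : ℕ => ((n : ℝ) + (2 - p)) / ((p : ℝ) * n)) atTop
        (nhds (1 / (p : ℝ))) := aux_tendsto (2 - p) _ hp0.ne'
    refine tendsto_of_tendsto_of_tendsto_of_le_of_le' hlow hup ?_ ?_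
    · filter_upwards [eventually_ge_atTop 1] with n hn
      have hn0 : (0 : ℝ) < n := by exact_mod_cast hn
      set q := (n + 1) / p with hqdef
      have h1 : p * q + (n + 1) % p = n + 1 := Nat.div_add_mod (n + 1) p
      have h2 : (n + 1) % p < p := Nat.mod_lt _ hp.pos
      have hlbn : n + 2 ≤ p * q + p := by omega
      have hlb : (n : ℝ) + 2 ≤ (p : ℝ) * q + p := by exact_mod_cast hlbn
      rw [div_le_div_iff₀ (by positivity) hn0]
      nlinarith [hlb, hn0.le]
    · filter_upwards [eventually_ge_atTop 1] with n hn
      have hn0 : (0 : ℝ) < n := by exact_mod_cast hn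
      set q := (n + 1) / p with hqdef
      have h1 : p * q ≤ n + 1 := Nat.mul_div_le (n + 1) p
      have hub : (p : ℝ) * q ≤ (n : ℝ) + 1 := by exact_mod_cast h1
      rw [div_le_div_iff₀ hn0 (by positivity)]
      nlinarith [hub, hn0.le]
  have hsum := hA.add hB
  have heq : (1 / ((p : ℝ) - 1) + 1 / (p : ℝ)) = (2 * (p : ℝ) - 1) / ((p : ℝ) * ((p : ℝ) - 1)) := by
    field_simp
    ring
  rw [heq] at hsum
  refine hsum.congr fun n => ?_
  have : (∑ i ∈ Finset.Icc 1 n, (padicValInt p ((i : ℤ) ^ p + 1) : ℝ))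
      = ((∑ i ∈ Finset.Icc 1 n, padicValInt p ((i : ℤ) ^ p + 1) : ℕ) : ℝ) := by
    push_cast; rfl
  rw [← add_div, this, valp_sum_eq p hp hodd n]
  push_cast
  ring
end

section
/- Let p and q be distinct primes with p odd. Then (1/n) Σ_{i=1}^{n} ν_q(i^p + 1) tends to gcd(p, q-1)/(q-1) as n → ∞. -/
open Filter Finset Polynomial

/-! ### Auxiliary lemmas -/

private lemma expand_sq_dvd (x y : ℤ) (n : ℕ) :
    (y ^ 2 : ℤ) ∣ (x + y) ^ n - x ^ n - n * x ^ (n - 1) * y := by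
  match n with
  | 0 => simp
  | 1 => simp
  | (m + 2) =>
    rw [add_pow]
    rw [Finset.sum_range_succ, Finset.sum_range_succ]
    have h1 : (m + 2) - 1 = m + 1 := rfl
    rw [h1]
    have h2 : ∀ i ∈ Finset.range (m + 1),
        (y^2 : ℤ) ∣ x ^ i * y ^ (m + 2 - i) * (m + 2).choose i := by
      intro i hi
      simp only [Finset.mem_range] at hi
      have : m + 2 - i = (m - i) + 2 := by omega
      rw [this, pow_add]
      ring_nf
      exact ⟨x ^ i * y ^ (m - i) * (m + 2).choose i, by ring⟩
    obtain ⟨E, hE⟩ := Finset.dvd_sum h2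
    rw [hE]
    simp [Nat.choose_succ_self_right]
    ring_nf
    exact ⟨E, by ring⟩

private lemma residue_count_bounds (m n : ℕ) (hm : 0 < m) (x : ZMod m) :
    |((((Icc 1 n).filter (fun i : ℕ => (i : ZMod m) = x)).card : ℝ)) - n / m| ≤ 1 := by
  haveI : NeZero m := ⟨hm.ne'⟩
  have hIcc : Icc 1 n = Ioc 0 n := by ext i; simp only [mem_Icc, mem_Ioc]; omega
  have hmem : ∀ i : ℕ, ((i : ZMod m) = x) ↔ (i ≡ x.val [MOD m]) := by
    intro i
    rw [← ZMod.natCast_zmod_val x, ZMod.natCast_eq_natCast_iff]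
    rw [ZMod.natCast_zmod_val]
  have hcard : ((Icc 1 n).filter (fun i : ℕ => (i : ZMod m) = x)).card
      = #{i ∈ Ioc 0 n | i ≡ x.val [MOD m]} := by
    rw [hIcc]; congr 1; ext i; simp [hmem]
  have hc := Nat.Ioc_filter_modEq_card 0 n hm x.val
  push_cast at hc
  set v := x.val with hv
  have hvlt : v < m := x.val_lt
  have hq : (0:ℚ) < (m:ℚ) := by positivity
  have key : ∀ F : ℤ, F = ⌊((n:ℚ) - v) / m⌋ - ⌊((0:ℚ) - v) / m⌋ →
      |((F.toNat : ℝ)) - n / m| ≤ 1 := by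
    intro F hF
    have h1 : ((n:ℚ) - v) / m - 1 < (⌊((n:ℚ) - v) / m⌋ : ℚ) := by
      have := Int.sub_one_lt_floor (((n:ℚ) - v) / m); linarith
    have h2 : (⌊((n:ℚ) - v) / m⌋ : ℚ) ≤ ((n:ℚ) - v) / m := Int.floor_le _
    have h3 : ((0:ℚ) - v) / m - 1 < (⌊((0:ℚ) - v) / m⌋ : ℚ) := by
      have := Int.sub_one_lt_floor (((0:ℚ) - v) / m); linarith
    have h4 : (⌊((0:ℚ) - v) / m⌋ : ℚ) ≤ ((0:ℚ) - v) / m := Int.floor_le _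
    have hlow : (n:ℚ) / m - 1 ≤ (F:ℚ) := by
      rw [hF]; push_cast
      have : ((n:ℚ) - v)/m - ((0:ℚ) - v)/m = (n:ℚ)/m := by ring
      nlinarith
    have hhigh : (F:ℚ) ≤ (n:ℚ)/m + 1 := by
      rw [hF]; push_cast
      have : ((n:ℚ) - v)/m - ((0:ℚ) - v)/m = (n:ℚ)/m := by ring
      nlinarith
    have hFt : ((F.toNat : ℚ)) ≤ (n:ℚ)/m + 1 := by
      rcases le_or_gt F 0 with h | h
      · have : F.toNat = 0 := Int.toNat_of_nonpos h
        rw [this]; push_cast; positivity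
      · have hcast : ((F.toNat:ℚ)) = (F:ℚ) := by exact_mod_cast Int.toNat_of_nonneg h.le
        rw [hcast]; exact hhigh
    have hFt2 : (n:ℚ)/m - 1 ≤ ((F.toNat : ℚ)) := by
      rcases le_or_gt 0 F with h | h
      · have hcast : ((F.toNat:ℚ)) = (F:ℚ) := by exact_mod_cast Int.toNat_of_nonneg h
        rw [hcast]; exact hlow
      · have : F.toNat = 0 := Int.toNat_of_nonpos h.le
        rw [this]
        have : (F:ℚ) < 0 := by exact_mod_cast h
        push_cast; linarith
    rw [abs_le]
    constructor
    · have hcast : ((F.toNat : ℝ)) = ((F.toNat : ℚ) : ℝ) := by push_cast; ring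
      rw [hcast]
      have := (Rat.cast_le (K := ℝ)).mpr hFt2
      push_cast at this ⊢; linarith
    · have hcast : ((F.toNat : ℝ)) = ((F.toNat : ℚ) : ℝ) := by push_cast; ring
      rw [hcast]
      have := (Rat.cast_le (K := ℝ)).mpr hFt
      push_cast at this ⊢; linarith
  have hcard2 : #{i ∈ Ioc 0 n | i ≡ v [MOD m]}
      = (⌊((n:ℚ) - v) / m⌋ - ⌊((0:ℚ) - v) / m⌋).toNat := by
    have := Int.toNat_eq_max (⌊((n:ℚ) - v) / m⌋ - ⌊((0:ℚ) - v) / m⌋)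
    omega
  rw [hcard, hcard2]
  exact key _ rfl

private lemma neg_bij_card (p : ℕ) (hodd : Odd p) (m : ℕ) [NeZero m] :
    #(univ.filter fun x : ZMod m => x ^ p + 1 = 0)
      = #(univ.filter fun x : ZMod m => x ^ p = 1) := by
  apply Finset.card_nbij' (i := fun x => -x) (j := fun x => -x)
  · intro x hx
    simp only [coe_filter, Set.mem_setOf_eq, mem_univ, true_and] at hx ⊢
    rw [hodd.neg_pow]
    have : x ^ p = -1 := by linear_combination hx
    rw [this]; ring
  · intro x hx
    simp only [coe_filter, Set.mem_setOf_eq, mem_univ, true_and] at hx ⊢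
    rw [hodd.neg_pow, hx]; ring
  · intro x _; simp
  · intro x _; simp

private lemma field_count (p q : ℕ) [hq : Fact q.Prime] (hp : p.Prime) (hodd : Odd p)
    (hqp : q ≠ p) :
    #(univ.filter fun x : ZMod q => x ^ p + 1 = 0) = p.gcd (q - 1) := by
  haveI : Fact p.Prime := ⟨hp⟩
  rw [neg_bij_card p hodd q]
  by_cases hdvd : p ∣ q - 1
  · obtain ⟨u, hu⟩ := exists_prime_orderOf_dvd_card (G := (ZMod q)ˣ) p
      (by rw [ZMod.card_units_eq_totient, Nat.totient_prime hq.out]; exact hdvd)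
    have hprim : IsPrimitiveRoot (u : ZMod q) p := by
      have := IsPrimitiveRoot.orderOf u
      rw [hu] at this
      exact IsPrimitiveRoot.coe_units_iff.mpr this
    have hset : (univ.filter fun x : ZMod q => x ^ p = 1) = nthRootsFinset p (1 : ZMod q) := by
      ext x
      simp [Polynomial.mem_nthRootsFinset hp.pos]
    rw [hset, hprim.card_nthRootsFinset, Nat.gcd_eq_left hdvd]
  · have hgcd : p.gcd (q - 1) = 1 := by
      have h := Nat.Prime.eq_one_or_self_of_dvd hp (p.gcd (q-1)) (Nat.gcd_dvd_left _ _)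
      rcases h with h | h
      · exact h
      · exact absurd (h ▸ Nat.gcd_dvd_right p (q-1)) hdvd
    rw [hgcd]
    have hset : (univ.filter fun x : ZMod q => x ^ p = 1) = {1} := by
      ext x
      simp only [mem_filter, mem_univ, true_and, mem_singleton]
      constructor
      · intro hx
        have hx0 : x ≠ 0 := by
          intro h; rw [h, zero_pow hp.ne_zero] at hx; exact zero_ne_one hx
        have h1 : orderOf x ∣ p := orderOf_dvd_of_pow_eq_one hx
        have h2 : orderOf x ∣ q - 1 := orderOf_dvd_of_pow_eq_one
          (ZMod.pow_card_sub_one_eq_one hx0)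
        have := Nat.dvd_gcd h1 h2
        rw [hgcd] at this
        rw [← orderOf_eq_one_iff]
        exact Nat.eq_one_of_dvd_one this
      · intro h; rw [h, one_pow]
    rw [hset, card_singleton]

private lemma q_not_dvd_base (p q : ℕ) (hp : p.Prime) (hq : q.Prime) (hpq : p ≠ q)
    (A : ℤ) (j : ℕ) (hj : 1 ≤ j) (hA : (q:ℤ)^j ∣ A^p + 1) :
    ¬ (q:ℤ) ∣ (p:ℤ) * A^(p-1) := by
  have hqz : Prime (q : ℤ) := Int.prime_iff_natAbs_prime.mpr (by simpa using hq)
  intro hdvd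
  have hqA : ¬ (q:ℤ) ∣ A := by
    intro hA'
    have h1 : (q:ℤ) ∣ A^p + 1 := dvd_trans (dvd_pow_self _ (by omega)) hA
    have h2 : (q:ℤ) ∣ A^p := hA'.pow hp.ne_zero
    exact hqz.not_dvd_one ((dvd_add_right h2).mp h1)
  rcases hqz.dvd_mul.mp hdvd with h | h
  · rw [Int.natCast_dvd_natCast] at h
    exact hpq ((Nat.prime_dvd_prime_iff_eq hq hp).mp h).symm
  · exact hqA (hqz.dvd_of_dvd_pow h)

private lemma root_int (p m : ℕ) [NeZero m] (x : ZMod m) (hx : x ^ p + 1 = 0) :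
    (m:ℤ) ∣ (x.val : ℤ)^p + 1 := by
  rw [← ZMod.intCast_zmod_eq_zero_iff_dvd]
  push_cast
  rw [ZMod.natCast_zmod_val]
  exact hx

private lemma card_step_s18 (p q : ℕ) (hp : p.Prime) (hq : q.Prime) (hpq : p ≠ q) [NeZero q]
    (k : ℕ) (hk : 1 ≤ k) :
    #(univ.filter fun x : ZMod (q^(k+1)) => x ^ p + 1 = 0)
      = #(univ.filter fun x : ZMod (q^k) => x ^ p + 1 = 0) := by
  have hdvd : q^k ∣ q^(k+1) := pow_dvd_pow q (Nat.le_succ k)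
  set φ := ZMod.castHom hdvd (ZMod (q^k)) with hφ
  have hqzp : Prime (q:ℤ) := Int.prime_iff_natAbs_prime.mpr (by simpa using hq)
  apply Finset.card_nbij (i := fun x => φ x)
  · intro x hx
    simp only [coe_filter, Set.mem_setOf_eq, mem_univ, true_and] at hx ⊢
    have : φ (x ^ p + 1) = 0 := by rw [hx]; exact map_zero φ
    simpa using this
  · -- injectivity
    intro x hx y hy hxy
    simp only [coe_filter, Set.mem_setOf_eq, mem_univ, true_and] at hx hy
    simp only at hxy
    set A := (x.val : ℤ) with hA
    set B := (y.val : ℤ) with hB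
    have hxr : (q:ℤ)^(k+1) ∣ A^p + 1 := by
      have := root_int p (q^(k+1)) x hx; push_cast at this ⊢; exact this
    have hyr : (q:ℤ)^(k+1) ∣ B^p + 1 := by
      have := root_int p (q^(k+1)) y hy; push_cast at this ⊢; exact this
    have hmodeq : x.val ≡ y.val [MOD q^k] := by
      rw [← ZMod.natCast_eq_natCast_iff]
      calc ((x.val : ℕ) : ZMod (q^k)) = φ x := by
            rw [ZMod.castHom_apply, ← ZMod.natCast_val]
        _ = φ y := hxy
        _ = ((y.val : ℕ) : ZMod (q^k)) := by rw [ZMod.castHom_apply, ← ZMod.natCast_val]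
    have hABmod : ((q:ℤ))^k ∣ B - A := by
      have := hmodeq.dvd
      push_cast at this ⊢
      exact this
    set u := B - A with hu
    obtain ⟨E, hE⟩ := expand_sq_dvd A u p
    have hBA : B ^ p - A ^ p = u * ((p:ℤ) * A^(p-1) + u * E) := by
      have hAB : A + u = B := by rw [hu]; ring
      calc B ^ p - A ^ p = (A + u)^p - A^p := by rw [hAB]
        _ = u * ((p:ℤ) * A^(p-1) + u * E) := by linear_combination hE
    have hqu : (q:ℤ) ∣ u := (dvd_pow_self (q:ℤ) (by omega : k ≠ 0)).trans hABmod
    have hw : ¬ (q:ℤ) ∣ ((p:ℤ) * A^(p-1) + u * E) := by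
      intro h
      have : (q:ℤ) ∣ (p:ℤ) * A^(p-1) := by
        have h2 : (q:ℤ) ∣ u * E := hqu.mul_right E
        exact (dvd_add_left h2).mp h
      exact q_not_dvd_base p q hp hq hpq A (k+1) (by omega) hxr this
    have hcop : IsCoprime ((q:ℤ)^(k+1)) ((p:ℤ) * A^(p-1) + u * E) :=
      IsCoprime.pow_left ((Prime.coprime_iff_not_dvd hqzp).mpr hw)
    have hdvdBA : (q:ℤ)^(k+1) ∣ B^p - A^p := by
      have := dvd_sub hyr hxr
      simpa using this
    rw [hBA] at hdvdBA
    have hfin : (q:ℤ)^(k+1) ∣ u := hcop.dvd_of_dvd_mul_right hdvdBA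
    have h00 : ((B - A : ℤ) : ZMod (q^(k+1))) = 0 :=
      (ZMod.intCast_zmod_eq_zero_iff_dvd _ _).mpr (by exact_mod_cast hfin)
    have h01 : ((B : ℤ) : ZMod (q^(k+1))) - ((A : ℤ) : ZMod (q^(k+1))) = 0 := by
      push_cast at h00; exact_mod_cast h00
    have h0 : ((B : ℤ) : ZMod (q^(k+1))) = ((A : ℤ) : ZMod (q^(k+1))) := by
      linear_combination h01
    simp only [hA, hB] at h0
    push_cast at h0
    calc x = ((x.val : ℕ) : ZMod (q^(k+1))) := (ZMod.natCast_zmod_val x).symm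
      _ = ((y.val : ℕ) : ZMod (q^(k+1))) := h0.symm
      _ = y := ZMod.natCast_zmod_val y
  · -- surjectivity
    intro r hr
    simp only [coe_filter, Set.mem_setOf_eq, mem_univ, true_and] at hr
    set R := (r.val : ℤ) with hR
    have hrr : (q:ℤ)^k ∣ R^p + 1 := by
      have := root_int p (q^k) r hr; push_cast at this ⊢; exact this
    obtain ⟨c, hc⟩ := id hrr
    have hnd : ¬ (q:ℤ) ∣ (p:ℤ) * R^(p-1) :=
      q_not_dvd_base p q hp hq hpq R k hk hrr
    have hcop : IsCoprime ((q:ℤ)) ((p:ℤ) * R^(p-1)) :=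
      (Prime.coprime_iff_not_dvd hqzp).mpr hnd
    obtain ⟨a, b, hab⟩ := hcop
    set t := -c * b with ht
    have hkey : (q:ℤ) ∣ c + (p:ℤ) * R^(p-1) * t := by
      have : c + (p:ℤ) * R^(p-1) * t = c * (a * q) := by
        rw [ht]; linear_combination (c : ℤ) * hab.symm
      rw [this]
      exact ⟨c * a, by ring⟩
    set s := R + t * (q:ℤ)^k with hs
    obtain ⟨E, hE⟩ := expand_sq_dvd R (t * (q:ℤ)^k) p
    have hsp : (q:ℤ)^(k+1) ∣ s^p + 1 := by
      obtain ⟨d, hd⟩ := hkey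
      have h2k : (q:ℤ)^(k+1) ∣ ((q:ℤ)^k)^2 := by
        rw [← pow_mul]
        exact pow_dvd_pow (q:ℤ) (by omega)
      obtain ⟨e, he⟩ := h2k
      refine ⟨d + t^2 * e * E, ?_⟩
      have : s ^ p = R^p + (p:ℤ) * R^(p-1) * (t * (q:ℤ)^k) + (t * (q:ℤ)^k)^2 * E := by
        rw [hs]; linear_combination hE
      calc s^p + 1 = (R^p + 1) + (p:ℤ) * R^(p-1) * t * (q:ℤ)^k + t^2 * (((q:ℤ)^k)^2) * E := by
            rw [this]; ring
        _ = (q:ℤ)^k * (c + (p:ℤ)*R^(p-1)*t) + t^2 * (((q:ℤ)^k)^2) * E := by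
            rw [hc]; ring
        _ = (q:ℤ)^k * ((q:ℤ) * d) + t^2 * ((q:ℤ)^(k+1) * e) * E := by rw [hd, he]
        _ = (q:ℤ)^(k+1) * (d + t^2 * e * E) := by ring
    refine ⟨((s : ℤ) : ZMod (q^(k+1))), ?_, ?_⟩
    · simp only [mem_coe, mem_filter, mem_univ, true_and]
      have : ((s^p + 1 : ℤ) : ZMod (q^(k+1))) = 0 := by
        rw [ZMod.intCast_zmod_eq_zero_iff_dvd]
        exact_mod_cast hsp
      push_cast at this
      exact this
    · simp only
      have h1 : φ ((s : ℤ) : ZMod (q^(k+1))) = ((s : ℤ) : ZMod (q^k)) := map_intCast φ s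
      rw [h1]
      have h2 : ((s - R : ℤ) : ZMod (q^k)) = 0 := by
        rw [ZMod.intCast_zmod_eq_zero_iff_dvd]
        refine ⟨t, ?_⟩
        rw [hs]; push_cast; ring
      have h3 : ((s : ℤ) : ZMod (q^k)) = ((R : ℤ) : ZMod (q^k)) :=
        sub_eq_zero.mp (by push_cast at h2 ⊢; linear_combination h2)
      rw [h3, hR]
      push_cast
      exact ZMod.natCast_zmod_val r

private lemma card_all (p q : ℕ) (hp : p.Prime) (hq : q.Prime) (hpq : p ≠ q)
    (hodd : Odd p) [NeZero q] (k : ℕ) (hk : 1 ≤ k) :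
    #(univ.filter fun x : ZMod (q^k) => x ^ p + 1 = 0) = p.gcd (q-1) := by
  induction k, hk using Nat.le_induction with
  | base =>
      haveI : Fact (q^1).Prime := ⟨by rwa [pow_one]⟩
      have := field_count p (q^1) hp hodd
        (by rw [pow_one]; exact fun h => hpq h.symm)
      rwa [show q^1 - 1 = q - 1 by rw [pow_one]] at this
  | succ k hk ih => rw [card_step_s18 p q hp hq hpq k hk, ih]

private lemma val_eq_card (q : ℕ) (hq : q.Prime) (m : ℕ) (hm : m ≠ 0) (K : ℕ)
    (hK : padicValNat q m ≤ K) :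
    padicValNat q m = #((Icc 1 K).filter fun k => q^k ∣ m) := by
  have hfact : ∀ k, (q^k ∣ m ↔ k ≤ padicValNat q m) := by
    intro k
    rw [Nat.Prime.pow_dvd_iff_le_factorization hq hm, Nat.factorization_def m hq]
  have : ((Icc 1 K).filter fun k => q^k ∣ m) = Icc 1 (padicValNat q m) := by
    ext k
    simp only [mem_filter, mem_Icc, hfact]
    omega
  rw [this, Nat.card_Icc]
  omega

private lemma sum_val_eq_s18 (p q : ℕ) (hq : q.Prime) (n K : ℕ)
    (hbound : ∀ i ∈ Icc 1 n, padicValNat q (i^p + 1) ≤ K) :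
    (∑ i ∈ Icc 1 n, padicValNat q (i^p + 1))
      = ∑ k ∈ Icc 1 K, #((Icc 1 n).filter fun i : ℕ => q^k ∣ i^p + 1) := by
  have h1 : (∑ i ∈ Icc 1 n, padicValNat q (i^p + 1))
      = ∑ i ∈ Icc 1 n, #((Icc 1 K).filter fun k => q^k ∣ i^p + 1) := by
    apply Finset.sum_congr rfl
    intro i hi
    exact val_eq_card q hq _ (by positivity) K (hbound i hi)
  rw [h1]
  simp only [Finset.card_filter]
  rw [Finset.sum_comm]

private lemma dvd_iff_zmod_root (p q : ℕ) [NeZero q] (k i : ℕ) :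
    q^k ∣ i^p + 1 ↔ ((i : ZMod (q^k)))^p + 1 = 0 := by
  have h : ((i^p + 1 : ℕ) : ZMod (q^k)) = ((i : ZMod (q^k)))^p + 1 := by push_cast; ring
  rw [← ZMod.natCast_eq_zero_iff, h]

private lemma a_bounds (p q : ℕ) (hq : q.Prime) [NeZero q] (k n : ℕ) (g : ℕ)
    (hg : #(univ.filter fun x : ZMod (q^k) => x ^ p + 1 = 0) = g) :
    |((((Icc 1 n).filter fun i : ℕ => ((i : ZMod (q^k)))^p + 1 = 0).card : ℝ))
      - g * n / q^k| ≤ g := by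
  haveI : NeZero (q^k) := ⟨pow_ne_zero _ hq.ne_zero⟩
  have hfib := Finset.card_eq_sum_card_fiberwise
    (s := (Icc 1 n).filter fun i : ℕ => ((i : ZMod (q^k)))^p + 1 = 0)
    (t := univ.filter fun x : ZMod (q^k) => x ^ p + 1 = 0)
    (f := fun i : ℕ => (i : ZMod (q^k)))
    (by intro i hi
        simp only [coe_filter, Set.mem_setOf_eq, mem_filter, mem_univ, true_and] at hi ⊢
        exact hi.2)
  have hfib2 : ∀ x ∈ (univ.filter fun x : ZMod (q^k) => x ^ p + 1 = 0),
      (((Icc 1 n).filter fun i : ℕ => ((i : ZMod (q^k)))^p + 1 = 0).filter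
        (fun i : ℕ => ((i : ZMod (q^k)) = x)))
      = (Icc 1 n).filter (fun i : ℕ => ((i : ZMod (q^k)) = x)) := by
    intro x hx
    simp only [mem_filter, mem_univ, true_and] at hx
    rw [Finset.filter_filter]
    apply Finset.filter_congr
    intro i _
    constructor
    · rintro ⟨_, h⟩; exact h
    · intro h; exact ⟨by rw [h]; exact hx, h⟩
  rw [Finset.sum_congr rfl (fun x hx => by rw [hfib2 x hx])] at hfib
  rw [hfib]
  push_cast
  set S := (univ.filter fun x : ZMod (q^k) => x ^ p + 1 = 0) with hSdef
  have hS : #S = g := hg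
  have h1 : (g:ℝ) * n / q^k = ∑ _x ∈ S, ((n:ℝ)/(q:ℝ)^k) := by
    rw [Finset.sum_const, hS]; push_cast; ring
  rw [h1, ← Finset.sum_sub_distrib]
  refine (Finset.abs_sum_le_sum_abs _ _).trans ?_
  have h2 : (g:ℝ) = ∑ _x ∈ S, (1:ℝ) := by rw [Finset.sum_const, hS]; push_cast; ring
  rw [h2]
  apply Finset.sum_le_sum
  intro x _
  have := residue_count_bounds (q^k) n (Nat.pos_of_ne_zero (pow_ne_zero _ hq.ne_zero)) x
  push_cast at this ⊢
  exact this

private lemma geom_Icc_s18 (q : ℕ) (hq : 2 ≤ q) (K : ℕ) :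
    ∑ k ∈ Icc 1 K, ((1:ℝ)/q)^k = (1 - (1/q)^K) / ((q:ℝ) - 1) := by
  have hq0 : (q:ℝ) ≠ 0 := by positivity
  have hq1 : (q:ℝ) - 1 ≠ 0 := by
    have : (2:ℝ) ≤ q := by exact_mod_cast hq
    intro h; nlinarith
  induction K with
  | zero => simp
  | succ K ih =>
      rw [Finset.sum_Icc_succ_top (by omega : 1 ≤ K + 1), ih]
      field_simp
      ring_nf; rw [mul_inv_cancel₀ hq0]; ring

theorem valq_pow_p_add_one_asymptotic (p q : ℕ) (hp : p.Prime) (hq : q.Prime)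
    (hpq : p ≠ q) (hodd : Odd p) :
    Tendsto (fun n : ℕ =>
        (∑ i ∈ Finset.Icc 1 n, (padicValInt q ((i : ℤ) ^ p + 1) : ℝ)) / n)
      atTop (nhds ((Nat.gcd p (q - 1) : ℝ) / ((q : ℝ) - 1))) := by
  haveI : NeZero q := ⟨hq.ne_zero⟩
  set g := p.gcd (q - 1) with hgdef
  set Lv : ℝ := (g : ℝ) / ((q:ℝ) - 1) with hLv
  have hq2 : 2 ≤ q := hq.two_le
  have hqR : (2:ℝ) ≤ (q:ℝ) := by exact_mod_cast hq2
  have hq1R : (1:ℝ) ≤ (q:ℝ) - 1 := by linarith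
  have hp1 : 1 ≤ p := hp.one_lt.le
  set K : ℕ → ℕ := fun n => p * (Nat.log q n + 1) with hKdef
  set f : ℕ → ℝ := fun n =>
    (∑ i ∈ Finset.Icc 1 n, (padicValInt q ((i : ℤ) ^ p + 1) : ℝ)) / n with hfdef
  -- the sum is a nat sum
  have hSnat : ∀ n : ℕ, (∑ i ∈ Finset.Icc 1 n, (padicValInt q ((i : ℤ) ^ p + 1) : ℝ))
      = ((∑ i ∈ Icc 1 n, padicValNat q (i^p+1) : ℕ) : ℝ) := by
    intro n
    rw [Nat.cast_sum]
    apply Finset.sum_congr rfl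
    intro i _
    congr 1
  -- main estimate
  have hmain : ∀ n : ℕ, 1 ≤ n → |f n - Lv| ≤ ((g:ℝ) * (K n) + g) / n := by
    intro n hn
    have hnR : (0:ℝ) < n := by exact_mod_cast hn
    -- bound on valuations
    have hbound : ∀ i ∈ Icc 1 n, padicValNat q (i^p + 1) ≤ K n := by
      intro i hi
      rw [mem_Icc] at hi
      have hpos : 0 < i^p + 1 := by positivity
      have hdvd : q ^ (padicValNat q (i^p+1)) ∣ i^p + 1 := pow_padicValNat_dvd
      have hle1 : q ^ (padicValNat q (i^p+1)) ≤ i^p + 1 := Nat.le_of_dvd hpos hdvd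
      have hle2 : i^p ≤ n^p := Nat.pow_le_pow_left hi.2 p
      have h3 : n^p < q^(K n) := by
        have h4 : n < q^(Nat.log q n + 1) := Nat.lt_pow_succ_log_self hq.one_lt n
        have h5 : n^p < (q^(Nat.log q n + 1))^p := Nat.pow_lt_pow_left h4 hp.ne_zero
        rwa [← pow_mul, mul_comm] at h5
      have h6 : q ^ (padicValNat q (i^p+1)) ≤ q^(K n) := by omega
      exact (Nat.pow_le_pow_iff_right hq.one_lt).mp h6
    -- swap sum
    have hswap := sum_val_eq_s18 p q hq n (K n) hbound
    have hswap2 : (∑ i ∈ Icc 1 n, padicValNat q (i^p + 1))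
        = ∑ k ∈ Icc 1 (K n),
            #((Icc 1 n).filter fun i : ℕ => ((i : ZMod (q^k)))^p + 1 = 0) := by
      rw [hswap]
      apply Finset.sum_congr rfl
      intro k _
      congr 1
      apply Finset.filter_congr
      intro i _
      exact dvd_iff_zmod_root p q k i
    -- bound each term
    have hterm : ∀ k ∈ Icc 1 (K n),
        |((#((Icc 1 n).filter fun i : ℕ => ((i : ZMod (q^k)))^p + 1 = 0) : ℝ))
          - (g:ℝ) * n / q^k| ≤ g := by
      intro k hk
      rw [mem_Icc] at hk
      exact a_bounds p q hq k n g (card_all p q hp hq hpq hodd k hk.1)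
    -- main sum bound
    have h5 : |((∑ i ∈ Icc 1 n, padicValNat q (i^p + 1) : ℕ) : ℝ)
        - ∑ k ∈ Icc 1 (K n), (g:ℝ) * n / q^k| ≤ (K n : ℝ) * g := by
      rw [hswap2, Nat.cast_sum, ← Finset.sum_sub_distrib]
      refine (Finset.abs_sum_le_sum_abs _ _).trans ?_
      have : (K n : ℝ) * g = ∑ _k ∈ Icc 1 (K n), (g:ℝ) := by
        rw [Finset.sum_const, Nat.card_Icc]
        simp
      rw [this]
      exact Finset.sum_le_sum hterm
    -- geometric sum
    have h6 : ∑ k ∈ Icc 1 (K n), (g:ℝ) * n / q^k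
        = (g:ℝ) * n * ((1 - (1/(q:ℝ))^(K n)) / ((q:ℝ) - 1)) := by
      rw [← geom_Icc_s18 q hq2 (K n), Finset.mul_sum]
      apply Finset.sum_congr rfl
      intro k _
      rw [one_div, inv_pow]
      field_simp
    have hnq : (n:ℝ) * (1/(q:ℝ))^(K n) ≤ 1 := by
      have h4 : n < q^(Nat.log q n + 1) := Nat.lt_pow_succ_log_self hq.one_lt n
      have h7 : Nat.log q n + 1 ≤ K n := by
        have := Nat.le_mul_of_pos_left (Nat.log q n + 1) (by omega : 0 < p)
        simpa [hKdef] using this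
      have h8 : (n:ℝ) ≤ (q:ℝ)^(K n) := by
        have : n ≤ q ^ (K n) := le_trans h4.le (Nat.pow_le_pow_right (by omega) h7)
        exact_mod_cast this
      have hqK : (0:ℝ) < (q:ℝ)^(K n) := by positivity
      rw [one_div, inv_pow]
      rw [mul_inv_le_iff₀ hqK]
      simpa using h8
    have h7 : |(g:ℝ) * n * ((1 - (1/(q:ℝ))^(K n)) / ((q:ℝ) - 1)) - (n:ℝ) * Lv| ≤ g := by
      have hexp : (g:ℝ) * n * ((1 - (1/(q:ℝ))^(K n)) / ((q:ℝ) - 1)) - (n:ℝ) * Lv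
          = -((g:ℝ) * ((n:ℝ) * (1/(q:ℝ))^(K n))) / ((q:ℝ) - 1) := by
        rw [hLv]
        field_simp
        ring
      rw [hexp, abs_div]
      have hnum : |-((g:ℝ) * ((n:ℝ) * (1/(q:ℝ))^(K n)))| ≤ g := by
        rw [abs_neg, abs_of_nonneg (by positivity)]
        nlinarith [hnq, Nat.cast_nonneg (α := ℝ) g]
      have hden : |(q:ℝ) - 1| = (q:ℝ) - 1 := abs_of_nonneg (by linarith)
      rw [hden]
      calc |-((g:ℝ) * ((n:ℝ) * (1/(q:ℝ))^(K n)))| / ((q:ℝ) - 1)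
          ≤ |-((g:ℝ) * ((n:ℝ) * (1/(q:ℝ))^(K n)))| := by
            apply div_le_self (abs_nonneg _) hq1R
        _ ≤ g := hnum
    -- combine
    set Sr : ℝ := ((∑ i ∈ Icc 1 n, padicValNat q (i^p + 1) : ℕ) : ℝ) with hSr
    have h8 : |Sr - (n:ℝ) * Lv| ≤ (g:ℝ) * (K n) + g := by
      have htri := abs_sub_le Sr (∑ k ∈ Icc 1 (K n), (g:ℝ) * n / q^k) ((n:ℝ) * Lv)
      have h9 : |(∑ k ∈ Icc 1 (K n), (g:ℝ) * n / q^k) - (n:ℝ) * Lv| ≤ g := by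
        rw [h6]; exact h7
      calc |Sr - (n:ℝ) * Lv| ≤ _ := htri
        _ ≤ (K n : ℝ) * g + g := by
            have := h5
            linarith
        _ = (g:ℝ) * (K n) + g := by ring
    have hfn : f n = Sr / n := by rw [hfdef]; simp only; rw [hSnat n, hSr]
    have hfd : f n - Lv = (Sr - (n:ℝ) * Lv) / n := by
      rw [hfn]
      field_simp
    rw [hfd, abs_div, abs_of_pos hnR]
    exact (div_le_div_iff_of_pos_right hnR).mpr h8
  -- limits
  have hlog2 : Tendsto (fun n : ℕ => Real.log n / n) atTop (nhds 0) :=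
    (Real.isLittleO_log_id_atTop.tendsto_div_nhds_zero).comp tendsto_natCast_atTop_atTop
  have hlogq : (0:ℝ) < Real.log q := Real.log_pos (by exact_mod_cast hq.one_lt)
  have hlogn : Tendsto (fun n : ℕ => (Nat.log q n : ℝ) / n) atTop (nhds 0) := by
    apply squeeze_zero' (g := fun n : ℕ => (1/Real.log q) * (Real.log n / n))
    · exact Eventually.of_forall (fun n => by positivity)
    · filter_upwards [eventually_ge_atTop 1] with n hn
      have hnR : (0:ℝ) < n := by exact_mod_cast hn
      have h1 : (Nat.log q n : ℝ) ≤ Real.logb q n := Real.natLog_le_logb n q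
      have h2 : Real.logb q n = Real.log n / Real.log q := rfl
      rw [div_le_iff₀ hnR]
      calc (Nat.log q n : ℝ) ≤ Real.logb q n := h1
        _ = 1/Real.log q * (Real.log n / n) * n := by
            rw [h2]; field_simp
    · have := hlog2.const_mul (1/Real.log q)
      simpa using this
  have hB : Tendsto (fun n : ℕ => ((g:ℝ) * (K n) + g) / n) atTop (nhds 0) := by
    have heq : ∀ n : ℕ, ((g:ℝ) * (K n) + g) / n
        = ((g:ℝ)*p) * ((Nat.log q n : ℝ)/n) + ((g:ℝ)*p + g) * (1/n) := by
      intro n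
      have : ((K n : ℕ) : ℝ) = (p:ℝ) * ((Nat.log q n : ℝ) + 1) := by
        rw [hKdef]; push_cast; ring
      rw [this]; ring
    have h1 := (hlogn.const_mul ((g:ℝ)*p)).add
      (tendsto_one_div_atTop_nhds_zero_nat.const_mul ((g:ℝ)*p + g))
    simp only [mul_zero, add_zero] at h1
    exact Tendsto.congr (fun n => (heq n).symm) h1
  rw [tendsto_iff_dist_tendsto_zero]
  simp only [Real.dist_eq]
  apply squeeze_zero' (g := fun n : ℕ => ((g:ℝ) * (K n) + g) / n)
  · exact Eventually.of_forall (fun n => abs_nonneg _)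
  · filter_upwards [eventually_ge_atTop 1] with n hn
    exact hmain n hn
  · exact hB
end
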